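/- arXiv:2112.05229 — 8 statements merged into one kernel-verified Lean document; each statement's English description precedes it below -/
import Mathlib

section
/- There exists a subgroup Γ of the unit group (ZMod p)ˣ such that for all v, w ∈ V the following are equivalent: (i) for every g ∈ G, Submodule.span (ZMod p) {g v} = Submodule.span (ZMod p) {g w}; (ii) there exists λ ∈ Γ with v = λ • w. -/
open Submodule

/-- In a vector space over a field, any nonzero vector can be mapped to any
other nonzero vector by a linear automorphism. -/
lemma exists_linearEquiv_map_eq {K : Type*} [Field K] {V : Type*} [AddCommGroup V]
    [Module K V] {v w : V} (hv : v ≠ 0) (hw : w ≠ 0) :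
    ∃ φ : V ≃ₗ[K] V, φ v = w := by
  classical
  have hv' := LinearIndepOn.singleton (R := K) (v := id) hv
  have hw' := LinearIndepOn.singleton (R := K) (v := id) hw
  let b := Module.Basis.extend hv'
  let c := Module.Basis.extend hw'
  have hvmem : v ∈ hv'.extend (Set.subset_univ _) :=
    hv'.subset_extend _ (Set.mem_singleton v)
  have hwmem : w ∈ hw'.extend (Set.subset_univ _) :=
    hw'.subset_extend _ (Set.mem_singleton w)
  have hcard := mk_eq_mk_of_basis' b c
  obtain ⟨e⟩ := Cardinal.eq.mp hcard
  let e' := e.trans (Equiv.swap (e ⟨v, hvmem⟩) ⟨w, hwmem⟩)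
  refine ⟨b.equiv c e', ?_⟩
  have hb : b ⟨v, hvmem⟩ = v := Module.Basis.extend_apply_self hv' ⟨v, hvmem⟩
  have hc : c ⟨w, hwmem⟩ = w := Module.Basis.extend_apply_self hw' ⟨w, hwmem⟩
  have : (b.equiv c e') (b ⟨v, hvmem⟩) = c (e' ⟨v, hvmem⟩) := b.equiv_apply _ c e'
  rw [hb] at this
  rw [this]
  have : e' ⟨v, hvmem⟩ = ⟨w, hwmem⟩ := by
    simp [e', Equiv.swap_apply_left]
  rw [this, hc]

/-- There exists a subgroup `Γ` of `(ZMod p)ˣ` such that for all `v w : V`,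
`span {g v} = span {g w}` for all `g ∈ G` iff `v = γ • w` for some `γ ∈ Γ`. -/
theorem stmt_1 (p : ℕ) [Fact p.Prime] (hp : p ≠ 2)
    (V : Type*) [AddCommGroup V] [Module (ZMod p) V] [Countable V] [Infinite V]
    (G : Subgroup (Equiv.Perm V))
    (hclosed : ∀ f : Equiv.Perm V, (∀ F : Finset V, ∃ g ∈ G, ∀ x ∈ F, g x = f x) → f ∈ G)
    (hAut : ∀ φ : V ≃ₗ[ZMod p] V, (φ.toEquiv : Equiv.Perm V) ∈ G)
    (hzero : ∀ g ∈ G, g 0 = (0 : V)) :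
    ∃ Γ : Subgroup (ZMod p)ˣ, ∀ v w : V,
      (∀ g ∈ G, Submodule.span (ZMod p) {g v} = Submodule.span (ZMod p) {g w}) ↔
      (∃ γ ∈ Γ, v = (γ : ZMod p) • w) := by
  set R : V → V → Prop := fun v w =>
    ∀ g ∈ G, Submodule.span (ZMod p) {g v} = Submodule.span (ZMod p) {g w} with hR
  have hrefl : ∀ v, R v v := fun v g _ => rfl
  have hsymm : ∀ {v w}, R v w → R w v := fun h g hg => (h g hg).symm
  have htrans : ∀ {u v w}, R u v → R v w → R u w :=
    fun h1 h2 g hg => (h1 g hg).trans (h2 g hg)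
  -- invariance under G
  have hinv : ∀ (h : Equiv.Perm V), h ∈ G → ∀ {v w}, R v w → R (h v) (h w) := by
    intro h hh v w hvw g hg
    have := hvw (g * h) (mul_mem hg hh)
    simpa [Equiv.Perm.mul_apply] using this
  -- scaling by a unit is in G
  have hscale : ∀ (c : (ZMod p)ˣ) {v w : V}, R v w → R ((c : ZMod p) • v) ((c : ZMod p) • w) := by
    intro c v w hvw
    have := hinv ((LinearEquiv.smulOfUnit (M := V) c).toEquiv) (hAut _) hvw
    simpa [LinearEquiv.smulOfUnit, Units.smul_def] using this
  refine ⟨{ carrier := {γ : (ZMod p)ˣ | ∀ v : V, R v ((γ : ZMod p) • v)}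
            one_mem' := by intro v; simpa using hrefl v
            mul_mem' := by
              intro a b ha hb v
              have h1 : R v ((b : ZMod p) • v) := hb v
              have h2 : R ((b : ZMod p) • v) ((a : ZMod p) • (b : ZMod p) • v) :=
                ha ((b : ZMod p) • v)
              have := htrans h1 h2
              simpa [mul_smul] using this
            inv_mem' := by
              intro a ha v
              have := ha (((a⁻¹ : (ZMod p)ˣ) : ZMod p) • v)
              simp only [smul_smul] at this
              have h2 : ((a : ZMod p) * ((a⁻¹ : (ZMod p)ˣ) : ZMod p)) = 1 := by
                rw [← Units.val_mul, mul_inv_cancel, Units.val_one]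
              rw [h2, one_smul] at this
              exact hsymm this }, ?_⟩
  intro v w
  constructor
  · intro hvw
    have h1 : Submodule.span (ZMod p) {v} = Submodule.span (ZMod p) {w} := by
      have := hvw 1 (one_mem G)
      simpa using this
    by_cases hw : w = 0
    · subst hw
      have hv0 : v = 0 := by
        have : v ∈ Submodule.span (ZMod p) ({(0 : V)} : Set V) := by
          rw [← h1]; exact Submodule.mem_span_singleton_self v
        simpa [Submodule.span_zero_singleton] using this
      exact ⟨1, fun u => by simpa using hrefl u, by simp [hv0]⟩
    · have hvmem : v ∈ Submodule.span (ZMod p) ({w} : Set V) := by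
        rw [← h1]; exact Submodule.mem_span_singleton_self v
      obtain ⟨c, hc⟩ := Submodule.mem_span_singleton.mp hvmem
      have hv0 : v ≠ 0 := by
        intro h0
        rw [h0] at h1
        have : w ∈ Submodule.span (ZMod p) ({(0 : V)} : Set V) := by
          rw [h1]; exact Submodule.mem_span_singleton_self w
        exact hw (by simpa [Submodule.span_zero_singleton] using this)
      have hc0 : c ≠ 0 := by
        rintro rfl; exact hv0 (by simp [← hc])
      refine ⟨Units.mk0 c hc0, ?_, by simp [← hc]⟩
      -- need : ∀ u, R u (c • u)
      intro u
      by_cases hu : u = 0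
      · subst hu; simpa using hrefl (0 : V)
      · obtain ⟨φ, hφ⟩ := exists_linearEquiv_map_eq (K := ZMod p) hw hu
        have hwc : R w ((c : ZMod p) • w) := by
          rw [hc]; exact hsymm hvw
        have := hinv (φ.toEquiv) (hAut φ) hwc
        simpa [hφ, map_smul] using this
  · rintro ⟨γ, hγ, rfl⟩
    exact hsymm (hγ w)
end

section
/- Let g be a bijection of the set of one-dimensional subspaces of V (submodules L with finrank (ZMod p) L = 1) onto itself such that for all one-dimensional subspaces L₀, L₁, L₂ of V: L₀ ≤ L₁ ⊔ L₂ if and only if g L₀ ≤ g L₁ ⊔ g L₂. Then there exists a linear automorphism φ : V ≃ₗ[ZMod p] V such that g L = Submodule.map φ L for every one-dimensional subspace L of V. -/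
open Submodule Module

section helpers
variable {p : ℕ} [Fact p.Prime] {V : Type*} [AddCommGroup V] [Module (ZMod p) V]

lemma exists_notin_span [Infinite V] (s : Set V) (hs : s.Finite) :
    ∃ z, z ∉ span (ZMod p) s := by
  have h1 : FiniteDimensional (ZMod p) (span (ZMod p) s) := FiniteDimensional.span_of_finite _ hs
  have h2 : Finite (span (ZMod p) s) := Module.finite_of_finite (ZMod p)
  by_contra h
  push_neg at h
  exact Set.infinite_univ (α := V)
    ((Set.eq_univ_iff_forall.2 h) ▸ Set.finite_coe_iff.mp h2)

lemma rank1_gen (W : Submodule (ZMod p) V) (hW : finrank (ZMod p) W = 1) :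
    ∃ w, w ≠ 0 ∧ W = span (ZMod p) {w} := by
  have hfd : FiniteDimensional (ZMod p) W := Module.finite_of_finrank_pos (by omega)
  have : Nontrivial W := Module.nontrivial_of_finrank_pos (R := ZMod p) (by omega)
  obtain ⟨⟨w, hwW⟩, hw0⟩ := exists_ne (0 : W)
  have hw : w ≠ 0 := by simpa [Subtype.ext_iff] using hw0
  refine ⟨w, hw, (Submodule.eq_of_le_of_finrank_eq ?_ ?_).symm⟩
  · exact (span_singleton_le_iff_mem _ _).2 hwW
  · rw [hW, finrank_span_singleton hw]

lemma line_le_eq {x y : V} (hx : x ≠ 0) (hy : y ≠ 0)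
    (h : span (ZMod p) {x} ≤ span (ZMod p) {y}) :
    span (ZMod p) {x} = span (ZMod p) {y} :=
  Submodule.eq_of_le_of_finrank_eq h
    (by rw [finrank_span_singleton hx, finrank_span_singleton hy])

lemma mem_pair_iff (x y z : V) :
    x ∈ span (ZMod p) {y, z} ↔
      span (ZMod p) {x} ≤ span (ZMod p) {y} ⊔ span (ZMod p) {z} := by
  rw [← span_insert, span_singleton_le_iff_mem]

/-- membership swap for pairs -/
lemma mem_pair_swap {a x y : V} (h : y ∈ span (ZMod p) {a, x})
    (hy : y ∉ span (ZMod p) {a}) : x ∈ span (ZMod p) {a, y} := by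
  obtain ⟨c, d, h⟩ := Submodule.mem_span_pair.1 h
  have hd : d ≠ 0 := by
    rintro rfl
    exact hy (by rw [← h]; simpa using smul_mem _ c (mem_span_singleton_self a))
  rw [Submodule.mem_span_pair]
  refine ⟨-(d⁻¹ * c), d⁻¹, ?_⟩
  have e2 : (d⁻¹ * d) • x = (-(d⁻¹ * c)) • a + d⁻¹ • y := by
    linear_combination (norm := module) d⁻¹ • h
  rw [inv_mul_cancel₀ hd, one_smul] at e2
  exact e2.symm

/-- coefficient extraction against a "triangular independent" triple -/
lemma ind3 {u v w : V} (hu : u ≠ 0) (hv : v ∉ span (ZMod p) {u})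
    (hw : w ∉ span (ZMod p) {u, v}) {c1 c2 c3 d1 d2 d3 : ZMod p}
    (h : c1 • u + c2 • v + c3 • w = d1 • u + d2 • v + d3 • w) :
    c1 = d1 ∧ c2 = d2 ∧ c3 = d3 := by
  have h3 : c3 = d3 := by
    by_contra hne
    have hne' : c3 - d3 ≠ 0 := sub_ne_zero.2 hne
    apply hw
    rw [Submodule.mem_span_pair]
    refine ⟨(c3 - d3)⁻¹ * (d1 - c1), (c3 - d3)⁻¹ * (d2 - c2), ?_⟩
    have e : (c3 - d3) • w = (d1 - c1) • u + (d2 - c2) • v := by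
      linear_combination (norm := module) h
    have e2 : ((c3 - d3)⁻¹ * (c3 - d3)) • w =
        ((c3 - d3)⁻¹ * (d1 - c1)) • u + ((c3 - d3)⁻¹ * (d2 - c2)) • v := by
      linear_combination (norm := module) (c3 - d3)⁻¹ • e
    rw [inv_mul_cancel₀ hne', one_smul] at e2
    exact e2.symm
  subst h3
  have h2 : c2 = d2 := by
    by_contra hne
    have hne' : c2 - d2 ≠ 0 := sub_ne_zero.2 hne
    apply hv
    rw [Submodule.mem_span_singleton]
    refine ⟨(c2 - d2)⁻¹ * (d1 - c1), ?_⟩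
    have e : (c2 - d2) • v = (d1 - c1) • u := by
      linear_combination (norm := module) h
    have e2 : ((c2 - d2)⁻¹ * (c2 - d2)) • v = ((c2 - d2)⁻¹ * (d1 - c1)) • u := by
      linear_combination (norm := module) (c2 - d2)⁻¹ • e
    rw [inv_mul_cancel₀ hne', one_smul] at e2
    exact e2.symm
  subst h2
  refine ⟨?_, rfl, rfl⟩
  have e : (c1 - d1) • u = 0 := by linear_combination (norm := module) h
  rcases smul_eq_zero.1 e with h | h
  · exact sub_eq_zero.1 h
  · exact absurd h hu

end helpers

section main
variable {p : ℕ} [Fact p.Prime] {V : Type*} [AddCommGroup V] [Module (ZMod p) V]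

theorem ftpg_aux [Infinite V] (S : V → Submodule (ZMod p) V)
    (hS0 : ∀ x, x ≠ 0 → finrank (ZMod p) (S x) = 1)
    (hSc : ∀ x y z, x ≠ 0 → y ≠ 0 → z ≠ 0 →
      (span (ZMod p) {x} ≤ span (ZMod p) {y} ⊔ span (ZMod p) {z} ↔ S x ≤ S y ⊔ S z))
    (hSsurj : ∀ W : Submodule (ZMod p) V, finrank (ZMod p) W = 1 → ∃ x, x ≠ 0 ∧ S x = W) :
    ∃ φ : V ≃ₗ[ZMod p] V, ∀ x, x ≠ 0 → S x = span (ZMod p) {φ x} := by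
  classical
  -- transfer of collinearity through generators
  have Tmem : ∀ {x y z x' y' z' : V}, x ≠ 0 → y ≠ 0 → z ≠ 0 →
      S x = span (ZMod p) {x'} → S y = span (ZMod p) {y'} → S z = span (ZMod p) {z'} →
      (x ∈ span (ZMod p) {y, z} ↔ x' ∈ span (ZMod p) {y', z'}) := by
    intro x y z x' y' z' hx hy hz hx' hy' hz'
    rw [mem_pair_iff, mem_pair_iff, hSc x y z hx hy hz, hx', hy', hz']
  have Tsing : ∀ {x y x' y' : V}, x ≠ 0 → y ≠ 0 →
      S x = span (ZMod p) {x'} → S y = span (ZMod p) {y'} →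
      (x ∈ span (ZMod p) {y} ↔ x' ∈ span (ZMod p) {y'}) := by
    intro x y x' y' hx hy hx' hy'
    have := Tmem hx hy hy hx' hy' hy' (z := y) (z' := y')
    rwa [Set.pair_eq_singleton, Set.pair_eq_singleton] at this
  -- S determines and is determined by the line
  have Tline : ∀ {x y : V}, x ≠ 0 → y ≠ 0 →
      (span (ZMod p) {x} = span (ZMod p) {y} ↔ S x = S y) := by
    intro x y hx hy
    constructor
    · intro h
      have h1 : x ∈ span (ZMod p) {y} := h ▸ mem_span_singleton_self x
      have h2 : y ∈ span (ZMod p) {x} := h ▸ mem_span_singleton_self y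
      obtain ⟨x', hx'0, hx'⟩ := rank1_gen _ (hS0 x hx)
      obtain ⟨y', hy'0, hy'⟩ := rank1_gen _ (hS0 y hy)
      rw [hx', hy']
      exact le_antisymm
        ((span_singleton_le_iff_mem _ _).2 ((Tsing hx hy hx' hy').1 h1))
        ((span_singleton_le_iff_mem _ _).2 ((Tsing hy hx hy' hx').1 h2))
    · intro h
      obtain ⟨x', hx'0, hx'⟩ := rank1_gen _ (hS0 x hx)
      have h1 : x' ∈ span (ZMod p) {x'} := mem_span_singleton_self x'
      have := (Tsing hx hy hx' (h ▸ hx')).2 h1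
      exact line_le_eq hx hy ((span_singleton_le_iff_mem _ _).2 this)
  obtain ⟨a, ha⟩ := exists_ne (0 : V)
  obtain ⟨a', ha', hSa⟩ := rank1_gen (S a) (hS0 a ha)
  have nz : ∀ {x : V}, x ∉ span (ZMod p) {a} → x ≠ 0 := by
    intro x hx h; exact hx (h ▸ zero_mem _)
  have addnz : ∀ {u x : V}, u ∈ span (ZMod p) {a} → x ∉ span (ZMod p) {a} →
      u + x ∉ span (ZMod p) {a} := by
    intro u x hu hx h
    exact hx (by simpa using sub_mem h hu)
  have amem : a ∈ span (ZMod p) {a} := mem_span_singleton_self a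
  -- existence of the normalized image vector
  have EX : ∀ x, x ∉ span (ZMod p) {a} →
      ∃ w, w ≠ 0 ∧ S x = span (ZMod p) {w} ∧ S (a + x) = span (ZMod p) {a' + w} := by
    intro x hx
    have hx0 : x ≠ 0 := nz hx
    have hax : a + x ≠ 0 := nz (addnz amem hx)
    obtain ⟨t, ht0, hSt⟩ := rank1_gen (S (a + x)) (hS0 _ hax)
    obtain ⟨x', hx'0, hSx⟩ := rank1_gen (S x) (hS0 _ hx0)
    have mem1 : a + x ∈ span (ZMod p) {a, x} :=
      add_mem (subset_span (by simp)) (subset_span (by simp))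
    have := (Tmem hax ha hx0 hSt hSa hSx).1 mem1
    obtain ⟨α, β, hab⟩ := Submodule.mem_span_pair.1 this
    have hβ : β ≠ 0 := by
      rintro rfl
      have ht : t ∈ span (ZMod p) {a'} := by
        rw [← hab]; simpa using smul_mem _ α (mem_span_singleton_self a')
      have : a + x ∈ span (ZMod p) {a} := (Tsing hax ha hSt hSa).2 ht
      exact hx (by simpa using sub_mem this amem)
    have hα : α ≠ 0 := by
      rintro rfl
      have ht : t ∈ span (ZMod p) {x'} := by
        rw [← hab]; simpa using smul_mem _ β (mem_span_singleton_self x')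
      have h1 : a + x ∈ span (ZMod p) {x} := (Tsing hax hx0 hSt hSx).2 ht
      obtain ⟨c, hc⟩ := Submodule.mem_span_singleton.1 h1
      have hca : a = (c - 1) • x := by
        rw [sub_smul, one_smul, hc]; abel
      have hc1 : c - 1 ≠ 0 := by
        rintro h; rw [h, zero_smul] at hca; exact ha hca
      apply hx
      rw [Submodule.mem_span_singleton]
      refine ⟨(c - 1)⁻¹, ?_⟩
      rw [hca, smul_smul, inv_mul_cancel₀ hc1, one_smul]
    refine ⟨(α⁻¹ * β) • x', smul_ne_zero (by simp [hα, hβ]) hx'0, ?_, ?_⟩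
    · rw [hSx, span_singleton_smul_eq (by simp [isUnit_iff_ne_zero, hα, hβ]) x']
    · have : a' + (α⁻¹ * β) • x' = α⁻¹ • t := by
        rw [← hab, smul_add, smul_smul, smul_smul, inv_mul_cancel₀ hα, one_smul]
      rw [this, hSt, span_singleton_smul_eq (by simp [isUnit_iff_ne_zero, hα]) t]
  choose! f₁ hf₁0 hf₁S hf₁a using EX
  have pair_le : ∀ {u v : V} {W : Submodule (ZMod p) V}, u ∈ W → v ∈ W →
      span (ZMod p) {u, v} ≤ W := fun hu hv =>
    span_le.2 (Set.insert_subset_iff.2 ⟨hu, Set.singleton_subset_iff.2 hv⟩)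
  -- Lemma A : additivity for triples a, x, y in "general position"
  have hA : ∀ x y, x ∉ span (ZMod p) {a} → y ∉ span (ZMod p) {a, x} →
      f₁ (x + y) = f₁ x + f₁ y := by
    intro x y hx hxy
    have hy : y ∉ span (ZMod p) {a} := fun h => hxy (span_mono (by simp) h)
    have hx0 : x ≠ 0 := nz hx
    have hy0 : y ≠ 0 := nz hy
    have hxy0 : x + y ∉ span (ZMod p) {a} := by
      intro h
      have hmem : x + y ∈ span (ZMod p) {a, x} := span_mono (by simp) h
      have := sub_mem hmem (subset_span (show x ∈ ({a, x} : Set V) by simp))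
      exact hxy (by simpa using this)
    have hvA : f₁ x ∉ span (ZMod p) {a'} :=
      fun h => hx ((Tsing hx0 ha (hf₁S x hx) hSa).2 h)
    have hwA : f₁ y ∉ span (ZMod p) {a', f₁ x} :=
      fun h => hxy ((Tmem hy0 ha hx0 (hf₁S y hy) hSa (hf₁S x hx)).2 h)
    have m3 : x + y ∈ span (ZMod p) {x, y} :=
      add_mem (subset_span (by simp)) (subset_span (by simp))
    obtain ⟨u, v, huv⟩ := Submodule.mem_span_pair.1
      ((Tmem (nz hxy0) hx0 hy0 (hf₁S _ hxy0) (hf₁S x hx) (hf₁S y hy)).1 m3)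
    have hax0 : a + x ≠ 0 := nz (addnz amem hx)
    have hay0 : a + y ≠ 0 := nz (addnz amem hy)
    have haxy0 : a + (x + y) ≠ 0 := nz (addnz amem hxy0)
    have m1 : a + (x + y) ∈ span (ZMod p) {a + x, y} := by
      have h' : a + (x + y) = (a + x) + y := by abel
      rw [h']; exact add_mem (subset_span (by simp)) (subset_span (by simp))
    obtain ⟨s, t, hst⟩ := Submodule.mem_span_pair.1
      ((Tmem haxy0 hax0 hy0 (hf₁a _ hxy0) (hf₁a x hx) (hf₁S y hy)).1 m1)
    have comb1 : s • a' + s • f₁ x + t • f₁ y =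
        (1 : ZMod p) • a' + u • f₁ x + v • f₁ y := by
      linear_combination (norm := module) hst - huv
    obtain ⟨hs1, hsu, htv⟩ := ind3 ha' hvA hwA comb1
    have m2 : a + (x + y) ∈ span (ZMod p) {a + y, x} := by
      have h' : a + (x + y) = (a + y) + x := by abel
      rw [h']; exact add_mem (subset_span (by simp)) (subset_span (by simp))
    obtain ⟨s', t', hst'⟩ := Submodule.mem_span_pair.1
      ((Tmem haxy0 hay0 hx0 (hf₁a _ hxy0) (hf₁a y hy) (hf₁S x hx)).1 m2)
    have comb2 : s' • a' + t' • f₁ x + s' • f₁ y =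
        (1 : ZMod p) • a' + u • f₁ x + v • f₁ y := by
      linear_combination (norm := module) hst' - huv
    obtain ⟨hs'1, ht'u, hs'v⟩ := ind3 ha' hvA hwA comb2
    have hu1 : u = 1 := by rw [← hsu, hs1]
    have hv1 : v = 1 := by rw [← hs'v, hs'1]
    rw [← huv, hu1, hv1, one_smul, one_smul]
  -- Lemma B : additivity for any x, y off the line of a with x + y off it too
  have hB : ∀ x y, x ∉ span (ZMod p) {a} → y ∉ span (ZMod p) {a} →
      x + y ∉ span (ZMod p) {a} → f₁ (x + y) = f₁ x + f₁ y := by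
    intro x y hx hy hxy
    obtain ⟨z, hz⟩ := exists_notin_span (p := p) {a, x, y} (Set.toFinite _)
    have tri : ∀ w ∈ ({a, x, y} : Set V), w ∈ span (ZMod p) ({a, x, y} : Set V) :=
      fun w hw => subset_span hw
    have hzax : z ∉ span (ZMod p) {a, x} := fun h =>
      hz (span_mono (by intro t ht; simp at ht ⊢; tauto) h)
    have hzay : z ∉ span (ZMod p) {a, y} := fun h =>
      hz (span_mono (by intro t ht; simp at ht ⊢; tauto) h)
    have hzaxy : z ∉ span (ZMod p) {a, x + y} := by
      intro h
      refine hz (pair_le (tri a (by simp)) (add_mem (tri x (by simp)) (tri y (by simp))) h)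
    have hyzax : y + z ∉ span (ZMod p) {a, x} := by
      intro h
      have h1 : y + z ∈ span (ZMod p) {a, x, y} :=
        span_mono (by intro t ht; simp at ht ⊢; tauto) h
      have := sub_mem h1 (tri y (by simp))
      exact hz (by simpa using this)
    have s1 : f₁ (x + y + z) = f₁ (x + y) + f₁ z := hA (x + y) z hxy hzaxy
    have s2 : f₁ (y + z) = f₁ y + f₁ z := hA y z hy hzay
    have s3 : f₁ (x + (y + z)) = f₁ x + f₁ (y + z) := hA x (y + z) hx hyzax
    have e : x + (y + z) = x + y + z := by abel
    rw [e] at s3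
    linear_combination (norm := module) s3 + s2 - s1
  -- negation
  have hE : ∀ x, x ∉ span (ZMod p) {a} → f₁ (-x) = -f₁ x := by
    intro x hx
    obtain ⟨z, hz⟩ := exists_notin_span (p := p) {a, x} (Set.toFinite _)
    have hza : z ∉ span (ZMod p) {a} := fun h => hz (span_mono (by simp) h)
    have hxz : x + z ∉ span (ZMod p) {a} := by
      intro h
      have := sub_mem (span_mono (show ({a} : Set V) ⊆ {a, x} by simp) h)
        (subset_span (show x ∈ ({a, x} : Set V) by simp))
      exact hz (by simpa using this)
    have hnx : -x ∉ span (ZMod p) {a} := fun h => hx (by simpa using neg_mem h)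
    have e0 : x + z + -x = z := by abel
    have s1 : f₁ (x + z + -x) = f₁ (x + z) + f₁ (-x) :=
      hB (x + z) (-x) hxz hnx (by rw [e0]; exact hza)
    rw [e0] at s1
    have s2 : f₁ (x + z) = f₁ x + f₁ z := hA x z hx hz
    linear_combination (norm := module) -s1 - s2
  -- the shift by an element of the line of a is independent of the base point
  have hC1 : ∀ u x y, u ∈ span (ZMod p) {a} → x ∉ span (ZMod p) {a} →
      y ∉ span (ZMod p) {a, x} → f₁ (u + x) - f₁ x = f₁ (u + y) - f₁ y := by
    intro u x y hu hx hxy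
    have hy : y ∉ span (ZMod p) {a} := fun h => hxy (span_mono (by simp) h)
    have hyx : x ∉ span (ZMod p) {a, y} := fun h => hxy (mem_pair_swap h hx)
    have hy_aux : y ∉ span (ZMod p) {a, u + x} := by
      intro h
      exact hxy (pair_le (subset_span (by simp))
        (add_mem (span_mono (by simp) hu) (subset_span (by simp))) h)
    have hx_aux : x ∉ span (ZMod p) {a, u + y} := by
      intro h
      exact hyx (pair_le (subset_span (by simp))
        (add_mem (span_mono (by simp) hu) (subset_span (by simp))) h)
    have e1 : f₁ (u + x + y) = f₁ (u + x) + f₁ y := hA (u + x) y (addnz hu hx) hy_aux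
    have e2 : f₁ (u + y + x) = f₁ (u + y) + f₁ x := hA (u + y) x (addnz hu hy) hx_aux
    have e3 : u + x + y = u + y + x := by abel
    rw [e3] at e1
    linear_combination (norm := module) e2 - e1
  obtain ⟨b, hb⟩ := exists_notin_span (p := p) {a} (Set.toFinite _)
  -- the shift function
  set δ : V → V := fun u => f₁ (u + b) - f₁ b with hδ
  have hC : ∀ u x, u ∈ span (ZMod p) {a} → x ∉ span (ZMod p) {a} →
      f₁ (u + x) = δ u + f₁ x := by
    intro u x hu hx
    have key : f₁ (u + x) - f₁ x = f₁ (u + b) - f₁ b := by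
      by_cases hxb : x ∈ span (ZMod p) {a, b}
      · obtain ⟨z, hz⟩ := exists_notin_span (p := p) {a, b, x} (Set.toFinite _)
        have hzax : z ∉ span (ZMod p) {a, x} := fun h =>
          hz (span_mono (by intro t ht; simp at ht ⊢; tauto) h)
        have hzab : z ∉ span (ZMod p) {a, b} := fun h =>
          hz (span_mono (by intro t ht; simp at ht ⊢; tauto) h)
        have e1 := hC1 u x z hu hx hzax
        have e2 := hC1 u b z hu hb hzab
        linear_combination (norm := module) e1 - e2
      · have hbx : b ∉ span (ZMod p) {a, x} := fun h => hxb (mem_pair_swap h hb)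
        exact hC1 u x b hu hx hbx
    linear_combination (norm := module) key
  have hD : ∀ u v, u ∈ span (ZMod p) {a} → v ∈ span (ZMod p) {a} →
      δ (u + v) = δ u + δ v := by
    intro u v hu hv
    have hvb : v + b ∉ span (ZMod p) {a} := addnz hv hb
    have e1 : f₁ (u + (v + b)) = δ u + f₁ (v + b) := hC u (v + b) hu hvb
    have hδv : δ v = f₁ (v + b) - f₁ b := rfl
    have hδuv : δ (u + v) = f₁ (u + v + b) - f₁ b := rfl
    rw [hδuv, show u + v + b = u + (v + b) from by abel, e1, hδv]
    abel
  -- spans on the line of a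
  have hSP : ∀ u, u ∈ span (ZMod p) {a} → u ≠ 0 →
      δ u ≠ 0 ∧ S u = span (ZMod p) {δ u} := by
    intro u hu hu0
    obtain ⟨z, hz⟩ := exists_notin_span (p := p) {a, b} (Set.toFinite _)
    have hza : z ∉ span (ZMod p) {a} := fun h => hz (span_mono (by simp) h)
    have hub : u + b ∉ span (ZMod p) {a} := addnz hu hb
    have hbz : b + z ∉ span (ZMod p) {a} := by
      intro h
      have := sub_mem (span_mono (show ({a} : Set V) ⊆ {a, b} by simp) h)
        (subset_span (show b ∈ ({a, b} : Set V) by simp))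
      exact hz (by simpa using this)
    have hzaub : z ∉ span (ZMod p) {a, u + b} := by
      intro h
      exact hz (pair_le (subset_span (by simp))
        (add_mem (span_mono (by simp) hu) (subset_span (by simp))) h)
    have e1 : f₁ (u + b + z) = f₁ (u + b) + f₁ z := hA (u + b) z hub hzaub
    have e2 : f₁ (b + z) = f₁ b + f₁ z := hA b z hb hz
    -- membership transfers
    have m1 : u + b ∈ span (ZMod p) {a, b} :=
      add_mem (span_mono (by simp) hu) (subset_span (by simp))
    obtain ⟨α, β, hαβ⟩ := Submodule.mem_span_pair.1
      ((Tmem (nz hub) ha (nz hb) (hf₁S _ hub) hSa (hf₁S b hb)).1 m1)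
    have m2 : u + b + z ∈ span (ZMod p) {a, b + z} := by
      have h' : u + b + z = u + (b + z) := by abel
      rw [h']
      exact add_mem (span_mono (by simp) hu) (subset_span (by simp))
    have hubz : u + b + z ∉ span (ZMod p) {a} := by
      have h' : u + b + z = u + (b + z) := by abel
      rw [h']; exact addnz hu hbz
    obtain ⟨lam, mu, hlm⟩ := Submodule.mem_span_pair.1
      ((Tmem (nz hubz) ha (nz hbz) (hf₁S _ hubz) hSa (hf₁S _ hbz)).1 m2)
    -- coefficient comparison in basis (a', f₁ b, f₁ z)
    have hvB : f₁ b ∉ span (ZMod p) {a'} :=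
      fun h => hb ((Tsing (nz hb) ha (hf₁S b hb) hSa).2 h)
    have hwB : f₁ z ∉ span (ZMod p) {a', f₁ b} :=
      fun h => hz ((Tmem (nz hza) ha (nz hb) (hf₁S z hza) hSa (hf₁S b hb)).2 h)
    have comb : lam • a' + mu • f₁ b + mu • f₁ z =
        α • a' + β • f₁ b + (1 : ZMod p) • f₁ z := by
      linear_combination (norm := module) hlm - mu • e2 + e1 - hαβ
    obtain ⟨h1, h2, h3⟩ := ind3 ha' hvB hwB comb
    have hβ1 : β = 1 := by rw [← h2, h3]
    have hδu : δ u = α • a' := by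
      simp only [hδ]
      rw [← hαβ, hβ1, one_smul]
      abel
    have hδu0 : δ u ≠ 0 := by
      simp only [hδ, sub_ne_zero]
      intro hfe
      have hSeq : S (u + b) = S b := by rw [hf₁S _ hub, hf₁S b hb, hfe]
      have := (Tline (nz hub) (nz hb)).2 hSeq
      have hmem : u + b ∈ span (ZMod p) {b} := this ▸ mem_span_singleton_self (u + b)
      obtain ⟨c, hc⟩ := Submodule.mem_span_singleton.1 hmem
      have hcb : u = (c - 1) • b := by rw [sub_smul, one_smul, hc]; abel
      have hc1 : c - 1 ≠ 0 := by rintro h; rw [h, zero_smul] at hcb; exact hu0 hcb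
      apply hb
      have : b = (c - 1)⁻¹ • u := by
        rw [hcb, smul_smul, inv_mul_cancel₀ hc1, one_smul]
      rw [this]
      exact smul_mem _ _ hu
    refine ⟨hδu0, ?_⟩
    have hα0 : α ≠ 0 := by rintro rfl; rw [zero_smul] at hδu; exact hδu0 hδu
    have hSua : S u = S a := by
      refine (Tline hu0 ha).1 ?_
      obtain ⟨c, hc⟩ := Submodule.mem_span_singleton.1 hu
      have hc0 : c ≠ 0 := by rintro rfl; rw [zero_smul] at hc; exact hu0 hc.symm
      rw [← hc, span_singleton_smul_eq (isUnit_iff_ne_zero.2 hc0) a]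
    rw [hSua, hSa, hδu, span_singleton_smul_eq (isUnit_iff_ne_zero.2 hα0) a']
  -- the full map
  set f : V → V := fun x => if x ∈ span (ZMod p) {a} then δ x else f₁ x with hf
  have hfin : ∀ x, x ∈ span (ZMod p) {a} → f x = δ x := fun x h => if_pos h
  have hfout : ∀ x, x ∉ span (ZMod p) {a} → f x = f₁ x := fun x h => if_neg h
  have hfadd : ∀ x y, f (x + y) = f x + f y := by
    intro x y
    by_cases hx : x ∈ span (ZMod p) {a} <;> by_cases hy : y ∈ span (ZMod p) {a}
    · rw [hfin _ (add_mem hx hy), hfin x hx, hfin y hy]; exact hD x y hx hy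
    · rw [hfout _ (addnz hx hy), hfin x hx, hfout y hy]; exact hC x y hx hy
    · rw [show x + y = y + x from by abel, hfout _ (addnz hy hx), hfin y hy,
        hfout x hx, hC y x hy hx]
      abel
    · by_cases hxy : x + y ∈ span (ZMod p) {a}
      · have hnx : -x ∉ span (ZMod p) {a} := fun h => hx (by simpa using neg_mem h)
        have e1 : f₁ (x + y + -x) = δ (x + y) + f₁ (-x) := hC (x + y) (-x) hxy hnx
        rw [show x + y + -x = y from by abel] at e1
        have e2 : f₁ (-x) = -f₁ x := hE x hx
        rw [hfin _ hxy, hfout x hx, hfout y hy]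
        linear_combination (norm := module) -e1 - e2
      · rw [hfout _ hxy, hfout x hx, hfout y hy]; exact hB x y hx hy hxy
  have hfspan : ∀ x, x ≠ 0 → S x = span (ZMod p) {f x} := by
    intro x hx0
    by_cases hx : x ∈ span (ZMod p) {a}
    · rw [hfin x hx]; exact (hSP x hx hx0).2
    · rw [hfout x hx]; exact hf₁S x hx
  have hfne : ∀ x, x ≠ 0 → f x ≠ 0 := by
    intro x hx0
    by_cases hx : x ∈ span (ZMod p) {a}
    · rw [hfin x hx]; exact (hSP x hx hx0).1
    · rw [hfout x hx]; exact hf₁0 x hx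
  -- assemble the linear equivalence
  let F : V →+ V := AddMonoidHom.mk' f hfadd
  let ℓ : V →ₗ[ZMod p] V := F.toZModLinearMap p
  have hℓ : ∀ x, ℓ x = f x := fun x => rfl
  have hinj : Function.Injective ℓ := by
    intro x y h
    by_contra hne
    have hxy0 : x - y ≠ 0 := sub_ne_zero.2 hne
    apply hfne _ hxy0
    rw [← hℓ, map_sub, h, sub_self]
  have hsurj : Function.Surjective ℓ := by
    intro w
    by_cases hw : w = 0
    · exact ⟨0, by rw [map_zero, hw]⟩
    · obtain ⟨x, hx0, hSx⟩ := hSsurj (span (ZMod p) {w}) (finrank_span_singleton hw)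
      have hspx : span (ZMod p) {w} = span (ZMod p) {f x} := by
        rw [← hSx]; exact hfspan x hx0
      have : w ∈ span (ZMod p) {f x} := hspx ▸ mem_span_singleton_self w
      obtain ⟨c, hc⟩ := Submodule.mem_span_singleton.1 this
      exact ⟨c • x, by rw [map_smul, hℓ, hc]⟩
  refine ⟨LinearEquiv.ofBijective ℓ ⟨hinj, hsurj⟩, fun x hx => ?_⟩
  rw [show (LinearEquiv.ofBijective ℓ ⟨hinj, hsurj⟩ x : V) = f x from rfl]
  exact hfspan x hx

end main

/-- Fundamental theorem of projective geometry: a bijection of the set of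
one-dimensional subspaces of `V` preserving projective lines is induced by a
linear automorphism of `V`. -/
theorem stmt_2 (p : ℕ) [Fact p.Prime] (hp : p ≠ 2)
    (V : Type*) [AddCommGroup V] [Module (ZMod p) V] [Countable V] [Infinite V]
    (g : {L : Submodule (ZMod p) V // Module.finrank (ZMod p) L = 1} ≃
         {L : Submodule (ZMod p) V // Module.finrank (ZMod p) L = 1})
    (hg : ∀ L₀ L₁ L₂ : {L : Submodule (ZMod p) V // Module.finrank (ZMod p) L = 1},
      (L₀ : Submodule (ZMod p) V) ≤ (L₁ : Submodule (ZMod p) V) ⊔ (L₂ : Submodule (ZMod p) V) ↔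
      (g L₀ : Submodule (ZMod p) V) ≤ (g L₁ : Submodule (ZMod p) V) ⊔ (g L₂ : Submodule (ZMod p) V)) :
    ∃ φ : V ≃ₗ[ZMod p] V,
      ∀ L : {L : Submodule (ZMod p) V // Module.finrank (ZMod p) L = 1},
        (g L : Submodule (ZMod p) V) =
          Submodule.map (φ : V →ₗ[ZMod p] V) (L : Submodule (ZMod p) V) := by
  classical
  set S : V → Submodule (ZMod p) V := fun x =>
    if hx : x = 0 then ⊥ else (g ⟨span (ZMod p) {x}, finrank_span_singleton hx⟩ :
      Submodule (ZMod p) V) with hSdef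
  have hSval : ∀ (x : V) (hx : x ≠ 0),
      S x = (g ⟨span (ZMod p) {x}, finrank_span_singleton hx⟩ : Submodule (ZMod p) V) :=
    fun x hx => dif_neg hx
  have hS0 : ∀ x, x ≠ 0 → finrank (ZMod p) (S x) = 1 := by
    intro x hx
    rw [hSval x hx]
    exact (g ⟨span (ZMod p) {x}, finrank_span_singleton hx⟩).2
  have hSc : ∀ x y z, x ≠ 0 → y ≠ 0 → z ≠ 0 →
      (span (ZMod p) {x} ≤ span (ZMod p) {y} ⊔ span (ZMod p) {z} ↔ S x ≤ S y ⊔ S z) := by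
    intro x y z hx hy hz
    rw [hSval x hx, hSval y hy, hSval z hz]
    exact hg ⟨span (ZMod p) {x}, finrank_span_singleton hx⟩
      ⟨span (ZMod p) {y}, finrank_span_singleton hy⟩
      ⟨span (ZMod p) {z}, finrank_span_singleton hz⟩
  have hSsurj : ∀ W : Submodule (ZMod p) V, finrank (ZMod p) W = 1 →
      ∃ x, x ≠ 0 ∧ S x = W := by
    intro W hW
    obtain ⟨x, hx0, hx⟩ := rank1_gen ((g.symm ⟨W, hW⟩ : {L : Submodule (ZMod p) V //
      Module.finrank (ZMod p) L = 1}) : Submodule (ZMod p) V) (g.symm ⟨W, hW⟩).2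
    refine ⟨x, hx0, ?_⟩
    rw [hSval x hx0]
    have : (⟨span (ZMod p) {x}, finrank_span_singleton hx0⟩ :
        {L : Submodule (ZMod p) V // Module.finrank (ZMod p) L = 1}) = g.symm ⟨W, hW⟩ :=
      Subtype.ext hx.symm
    rw [this, Equiv.apply_symm_apply]
  obtain ⟨φ, hφ⟩ := ftpg_aux S hS0 hSc hSsurj
  refine ⟨φ, fun L => ?_⟩
  obtain ⟨x, hx0, hx⟩ := rank1_gen (L : Submodule (ZMod p) V) L.2
  have hL : L = ⟨span (ZMod p) {x}, finrank_span_singleton hx0⟩ := Subtype.ext hx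
  rw [hL]
  have h1 : (g ⟨span (ZMod p) {x}, finrank_span_singleton hx0⟩ : Submodule (ZMod p) V) =
      span (ZMod p) {φ x} := by rw [← hSval x hx0]; exact hφ x hx0
  rw [h1]
  rw [show ((⟨span (ZMod p) {x}, finrank_span_singleton hx0⟩ : {L : Submodule (ZMod p) V //
      Module.finrank (ZMod p) L = 1}) : Submodule (ZMod p) V) = span (ZMod p) {x} from rfl,
    Submodule.map_span, Set.image_singleton]
  rfl
end

section
/- Assume in addition: (i) for every g ∈ G and all nonzero v, w ∈ V with Submodule.span (ZMod p) {v} = Submodule.span (ZMod p) {w}, one has Submodule.span (ZMod p) {g v} = Submodule.span (ZMod p) {g w}; and (ii) G preserves projective lines, i.e., for every g ∈ G and all nonzero u, v, w ∈ V: u ∈ Submodule.span (ZMod p) {v, w} if and only if g u ∈ Submodule.span (ZMod p) {g v, g w}. Then G acts on the one-dimensional subspaces of V like Aut(V): for every g ∈ G there exists a linear automorphism φ : V ≃ₗ[ZMod p] V such that Submodule.span (ZMod p) {g v} = Submodule.span (ZMod p) {φ v} for every v ∈ V. -/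
open Submodule

section Helpers
variable {K : Type*} [Field K] {V : Type*} [AddCommGroup V] [Module K V]

lemma sim_span' {x y : V} :
    (span K {x} = span K {y}) ↔ ∃ c : K, c ≠ 0 ∧ x = c • y := by
  constructor
  · intro h
    obtain ⟨z, hz⟩ := Submodule.span_singleton_eq_span_singleton.mp h
    exact ⟨(z⁻¹ : Kˣ), Units.ne_zero _, by rw [← hz]; exact (inv_smul_smul z x).symm⟩
  · rintro ⟨c, hc, rfl⟩
    exact Submodule.span_singleton_eq_span_singleton.mpr
      ⟨(Units.mk0 c hc)⁻¹, by simp [Units.smul_def, inv_smul_smul₀ hc]⟩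

lemma span_pair_congr' {x x' y y' : V}
    (hx : ∃ c : K, c ≠ 0 ∧ x = c • x') (hy : ∃ c : K, c ≠ 0 ∧ y = c • y') :
    span K {x, y} = span K {x', y'} := by
  obtain ⟨c, hc, rfl⟩ := hx
  obtain ⟨d, hd, rfl⟩ := hy
  apply le_antisymm
  · rw [Submodule.span_le]
    rintro w hw
    rcases hw with rfl | rfl
    · exact Submodule.smul_mem _ _ (Submodule.subset_span (by simp))
    · exact Submodule.smul_mem _ _ (Submodule.subset_span (by simp))
  · rw [Submodule.span_le]
    rintro w hw
    rcases hw with rfl | rfl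
    · exact Submodule.mem_span_pair.mpr ⟨c⁻¹, 0, by simp [inv_smul_smul₀ hc]⟩
    · exact Submodule.mem_span_pair.mpr ⟨0, d⁻¹, by simp [inv_smul_smul₀ hd]⟩

lemma g_span_finset (g : Equiv.Perm V)
    (hg1 : ∀ v w : V, v ≠ 0 → w ≠ 0 → span K {v} = span K {w} →
      span K {g v} = span K {g w})
    (hg2 : ∀ u v w : V, u ≠ 0 → v ≠ 0 → w ≠ 0 → u ∈ span K ({v, w} : Set V) →
      g u ∈ span K ({g v, g w} : Set V)) :
    ∀ s : Finset V, (∀ x ∈ s, x ≠ 0) → ∀ u : V, u ≠ 0 →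
      u ∈ span K (s : Set V) → g u ∈ span K (g '' (s : Set V)) := by
  classical
  intro s
  induction s using Finset.induction_on with
  | empty => intro _ u hu h; simp at h; exact absurd h hu
  | @insert v t hv IH =>
    intro hne u hu hmem
    rw [Finset.coe_insert, Submodule.mem_span_insert] at hmem
    obtain ⟨a, z, hz, rfl⟩ := hmem
    have hvne : v ≠ 0 := hne v (Finset.mem_insert_self _ _)
    have hne' : ∀ x ∈ t, x ≠ 0 := fun x hx => hne x (Finset.mem_insert_of_mem hx)
    by_cases hz0 : z = 0
    · subst hz0
      have ha : a ≠ 0 := by rintro rfl; simp at hu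
      have hsim : span K {a • v + 0} = span K {v} := sim_span'.mpr ⟨a, ha, by simp⟩
      have := hg1 _ v hu hvne hsim
      have hmem : g (a • v + 0) ∈ span K {g v} := by
        rw [← this]; exact Submodule.mem_span_singleton_self _
      refine Submodule.span_mono ?_ hmem
      intro w hw
      simp only [Set.mem_singleton_iff] at hw
      subst hw
      exact Set.mem_image_of_mem _ (by simp)
    · by_cases ha : a = 0
      · subst ha
        have : g (0 • v + z) ∈ span K (g '' (t : Set V)) := by
          simpa using IH hne' z hz0 (by simpa using hz)
        refine Submodule.span_mono ?_ (by simpa using this)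
        exact Set.image_mono (by simp [Finset.coe_insert, Set.subset_insert])
      · have hmem2 : a • v + z ∈ span K ({v, z} : Set V) :=
          Submodule.mem_span_pair.mpr ⟨a, 1, by simp⟩
        have := hg2 _ v z hu hvne hz0 hmem2
        have hgz : g z ∈ span K (g '' (t : Set V)) := IH hne' z hz0 hz
        refine Submodule.span_le.mpr ?_ this
        rintro w hw
        rcases hw with rfl | rfl
        · exact Submodule.subset_span
            (Set.mem_image_of_mem _ (by simp [Finset.coe_insert]))
        · refine Submodule.span_mono ?_ hgz
          exact Set.image_mono (by simp [Finset.coe_insert, Set.subset_insert])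

end Helpers
set_option maxHeartbeats 4000000 in
theorem aux_main {K V ι : Type*} [Field K] [AddCommGroup V] [Module K V] [Infinite ι]
    (hK : ∀ t : K, ∃ n : ℕ, (n : K) = t) (b : Module.Basis ι K V)
    (g : Equiv.Perm V) (hg0 : g 0 = 0)
    (hg1 : ∀ v w : V, v ≠ 0 → w ≠ 0 → span K {v} = span K {w} →
      span K {g v} = span K {g w})
    (hg1' : ∀ v w : V, v ≠ 0 → w ≠ 0 → span K {v} = span K {w} →
      span K {g.symm v} = span K {g.symm w})
    (hg2 : ∀ u v w : V, u ≠ 0 → v ≠ 0 → w ≠ 0 → u ∈ span K ({v, w} : Set V) →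
      g u ∈ span K ({g v, g w} : Set V))
    (hg2' : ∀ u v w : V, u ≠ 0 → v ≠ 0 → w ≠ 0 → u ∈ span K ({v, w} : Set V) →
      g.symm u ∈ span K ({g.symm v, g.symm w} : Set V)) :
    ∃ φ : V ≃ₗ[K] V, ∀ v : V, span K {g v} = span K {φ v} := by
  classical
  have hg0' : g.symm 0 = 0 := by
    conv_lhs => rw [← hg0]
    exact g.symm_apply_apply 0
  have gne : ∀ v : V, v ≠ 0 → g v ≠ 0 := fun v hv h =>
    hv (g.injective (by rw [h, hg0]))
  have gne' : ∀ v : V, v ≠ 0 → g.symm v ≠ 0 := fun v hv h =>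
    hv (g.symm.injective (by rw [h, hg0']))
  obtain ⟨i₀⟩ : Nonempty ι := inferInstance
  have hbne : ∀ i : ι, b i ≠ 0 := fun i => b.ne_zero i
  have simtrans : ∀ {x y z : V}, (∃ c : K, c ≠ 0 ∧ x = c • y) →
      (∃ c : K, c ≠ 0 ∧ y = c • z) → ∃ c : K, c ≠ 0 ∧ x = c • z := by
    rintro x y z ⟨c, hc, rfl⟩ ⟨e, he, rfl⟩
    exact ⟨c * e, mul_ne_zero hc he, (mul_smul c e z).symm⟩
  have simsymm : ∀ {x y : V}, (∃ c : K, c ≠ 0 ∧ x = c • y) →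
      ∃ c : K, c ≠ 0 ∧ y = c • x := by
    rintro x y ⟨c, hc, rfl⟩
    exact ⟨c⁻¹, inv_ne_zero hc, (inv_smul_smul₀ hc y).symm⟩
  have hrne : ∀ (v : V) (i : ι), b.repr v i ≠ 0 → v ≠ 0 := by
    intro v i h hv
    rw [hv] at h; simp at h
  have hpair_ne : ∀ (i j : ι), i ≠ j → ∀ s t : K, s ≠ 0 → s • b i + t • b j ≠ 0 := by
    intro i j hij s t hs
    refine hrne _ i ?_
    simp [Finsupp.single_apply, Ne.symm hij, hs]
  -- independence of the image of the basis
  have bwd := g_span_finset g.symm hg1' hg2'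
  have gb_not_mem : ∀ (i : ι) (s : Finset ι), i ∉ s →
      g (b i) ∉ span K ((fun j : ι => g (b j)) '' (s : Set ι)) := by
    intro i s his hmem
    have h1 : g (b i) ∈ span K ((s.image (fun j : ι => g (b j)) : Finset V) : Set V) := by
      rw [Finset.coe_image]; exact hmem
    have h2 := bwd (s.image fun j : ι => g (b j))
      (by intro x hx
          simp only [Finset.mem_image] at hx
          obtain ⟨j, _, rfl⟩ := hx; exact gne _ (hbne j))
      (g (b i)) (gne _ (hbne i)) h1
    rw [Finset.coe_image] at h2
    simp only [Set.image_image, Equiv.symm_apply_apply] at h2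
    exact (b.linearIndependent.notMem_span_image his) h2
  have gbind : LinearIndependent K (fun i : ι => g (b i)) := by
    rw [linearIndependent_iff']
    intro s c hsum i his
    by_contra hci
    apply gb_not_mem i (s.erase i) (Finset.notMem_erase i s)
    have hdec : c i • g (b i) + ∑ j ∈ s.erase i, c j • g (b j) = 0 := by
      rw [Finset.add_sum_erase s (fun j : ι => c j • g (b j)) his]; exact hsum
    have hmem : (∑ j ∈ s.erase i, c j • g (b j)) ∈
        span K ((fun j : ι => g (b j)) '' ((s.erase i : Finset ι) : Set ι)) := by
      refine Submodule.sum_mem _ ?_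
      intro j hj
      exact Submodule.smul_mem _ _
        (Submodule.subset_span (Set.mem_image_of_mem _ (Finset.mem_coe.mpr hj)))
    have hrw : g (b i) = (c i)⁻¹ • (c i • g (b i)) := (inv_smul_smul₀ hci _).symm
    rw [hrw, eq_neg_of_add_eq_zero_left hdec]
    exact Submodule.smul_mem _ _ (Submodule.neg_mem _ hmem)
  -- construction of the normalized family f
  have exf : ∀ i : ι, ∃ c : K, c ≠ 0 ∧ (i ≠ i₀ →
      ∃ a : K, a ≠ 0 ∧ g (b i₀ + b i) = a • (g (b i₀) + c • g (b i))) := by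
    intro i
    by_cases hi : i = i₀
    · exact ⟨1, one_ne_zero, fun h => absurd hi h⟩
    · have hu : b i₀ + b i ≠ 0 := by
        have := hpair_ne i₀ i (Ne.symm hi) 1 1 one_ne_zero
        simpa using this
      have hgu : g (b i₀ + b i) ≠ 0 := gne _ hu
      have hmem : b i₀ + b i ∈ span K ({b i₀, b i} : Set V) :=
        Submodule.mem_span_pair.mpr ⟨1, 1, by simp⟩
      have hgmem := hg2 _ _ _ hu (hbne i₀) (hbne i) hmem
      obtain ⟨a, e, hae⟩ := Submodule.mem_span_pair.mp hgmem
      have ha : a ≠ 0 := by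
        rintro rfl
        have he : e ≠ 0 := by rintro rfl; rw [← hae] at hgu; simp at hgu
        have hsp : span K {g (b i₀ + b i)} = span K {g (b i)} :=
          sim_span'.mpr ⟨e, he, by rw [← hae]; simp⟩
        have hsp' := hg1' _ _ hgu (gne _ (hbne i)) hsp
        simp only [Equiv.symm_apply_apply] at hsp'
        obtain ⟨c, hc, hcc⟩ := sim_span'.mp hsp'
        have h1 : b.repr (b i₀ + b i) i₀ = b.repr (c • b i) i₀ := by rw [hcc]
        simp [Finsupp.single_apply, hi] at h1
      have he : e ≠ 0 := by
        rintro rfl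
        have hsp : span K {g (b i₀ + b i)} = span K {g (b i₀)} :=
          sim_span'.mpr ⟨a, ha, by rw [← hae]; simp⟩
        have hsp' := hg1' _ _ hgu (gne _ (hbne i₀)) hsp
        simp only [Equiv.symm_apply_apply] at hsp'
        obtain ⟨c, hc, hcc⟩ := sim_span'.mp hsp'
        have h1 : b.repr (b i₀ + b i) i = b.repr (c • b i₀) i := by rw [hcc]
        simp [Finsupp.single_apply, hi, Ne.symm hi] at h1
      refine ⟨e / a, div_ne_zero he ha, fun _ => ⟨a, ha, ?_⟩⟩
      rw [← hae]
      match_scalars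
      · ring
      · field_simp
  choose d hd0 hdkey using exf
  set f : ι → V := fun i => if i = i₀ then g (b i₀) else d i • g (b i) with hf
  have hfi₀ : f i₀ = g (b i₀) := by simp [hf]
  have hfsim : ∀ i : ι, ∃ c : K, c ≠ 0 ∧ f i = c • g (b i) := by
    intro i
    by_cases hi : i = i₀
    · subst hi; exact ⟨1, one_ne_zero, by simp [hf]⟩
    · exact ⟨d i, hd0 i, by simp [hf, hi]⟩
  have hkey : ∀ i : ι, i ≠ i₀ → ∃ a : K, a ≠ 0 ∧ g (b i₀ + b i) = a • (f i₀ + f i) := by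
    intro i hi
    obtain ⟨a, ha, h⟩ := hdkey i hi
    exact ⟨a, ha, by rw [h]; simp [hf, hi]⟩
  have hfne : ∀ i, f i ≠ 0 := by
    intro i
    obtain ⟨c, hc, hfc⟩ := hfsim i
    rw [hfc]
    exact smul_ne_zero hc (gne _ (hbne i))
  have findep : LinearIndependent K f := by
    have hu := gbind.units_smul (fun i => Units.mk0 (if i = i₀ then 1 else d i)
      (by split
          · exact one_ne_zero
          · exact hd0 _))
    convert hu using 1
    funext i
    by_cases hi : i = i₀ <;> simp [hf, hi, Units.smul_def]
  set φ : V →ₗ[K] V := b.constr K f with hφ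
  have φb : ∀ i, φ (b i) = f i := fun i => b.constr_basis K f i
  have φinj : Function.Injective φ := by
    intro v w hvw
    have h0 : φ (v - w) = 0 := by rw [map_sub, hvw, sub_self]
    have hrepr : φ (v - w) = ∑ i ∈ (b.repr (v - w)).support, b.repr (v - w) i • f i := by
      rw [hφ, Module.Basis.constr_apply, Finsupp.sum]
    have hz := linearIndependent_iff'.mp findep (b.repr (v - w)).support (b.repr (v - w))
      (by rw [← hrepr, h0])
    have hz2 : b.repr (v - w) = 0 := Finsupp.ext fun i => by
      by_cases hi : i ∈ (b.repr (v - w)).support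
      · exact hz i hi
      · simpa using Finsupp.notMem_support_iff.mp hi
    have : v - w = 0 := by
      have := congrArg b.repr.symm hz2
      simpa using this
    exact sub_eq_zero.mp this

  -- simp list facts
  have SL := True
  have claim1 : ∀ i : ι, i ≠ i₀ → ∀ t : K, ∃ c : K, c ≠ 0 ∧
      g (b i₀ + t • b i) = c • (f i₀ + t • f i) := by
    intro i hi
    obtain ⟨j, hj⟩ := Infinite.exists_notMem_finset ({i₀, i} : Finset ι)
    have hj' : j ≠ i₀ ∧ j ≠ i := by
      constructor <;> intro h <;> exact hj (by simp [h])
    have htrip_ne : ∀ (l m n : ι), l ≠ m → l ≠ n → m ≠ n → ∀ a s t : K, a ≠ 0 →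
        a • b l + s • b m + t • b n ≠ 0 := by
      intro l m n hlm hln hmn a s t ha
      refine hrne _ l ?_
      simp [Finsupp.single_apply, Ne.symm hlm, Ne.symm hln, ha]
    have exσ : ∀ t : K, ∃ c : K, ∃ e : K, e ≠ 0 ∧
        g (b i₀ + t • b i) = e • (f i₀ + c • f i) := by
      intro t
      by_cases ht : t = 0
      · subst ht
        exact ⟨0, 1, one_ne_zero, by simp [hfi₀]⟩
      · have hA : b i₀ + t • b i ≠ 0 := by
          simpa using hpair_ne i₀ i (Ne.symm hi) 1 t one_ne_zero
        have hmem : b i₀ + t • b i ∈ span K ({b i₀, b i} : Set V) :=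
          Submodule.mem_span_pair.mpr ⟨1, t, by simp⟩
        have hgmem := hg2 _ _ _ hA (hbne i₀) (hbne i) hmem
        have hsp : span K ({g (b i₀), g (b i)} : Set V) = span K ({f i₀, f i} : Set V) :=
          span_pair_congr' ⟨1, one_ne_zero, by simp [hfi₀]⟩ (simsymm (hfsim i))
        rw [hsp] at hgmem
        obtain ⟨a, e, hae⟩ := Submodule.mem_span_pair.mp hgmem
        have hgA : g (b i₀ + t • b i) ≠ 0 := gne _ hA
        have ha : a ≠ 0 := by
          rintro rfl
          have he : e ≠ 0 := by rintro rfl; rw [← hae] at hgA; simp at hgA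
          have hsim1 : span K {g (b i₀ + t • b i)} = span K {g (b i)} :=
            sim_span'.mpr (simtrans ⟨e, he, by rw [← hae]; simp⟩ (hfsim i))
          have hsp' := hg1' _ _ hgA (gne _ (hbne i)) hsim1
          simp only [Equiv.symm_apply_apply] at hsp'
          obtain ⟨c, hc, hcc⟩ := sim_span'.mp hsp'
          have h1 : b.repr (b i₀ + t • b i) i₀ = b.repr (c • b i) i₀ := by rw [hcc]
          simp [Finsupp.single_apply, hi] at h1
        refine ⟨e / a, a, ha, ?_⟩
        rw [← hae]
        match_scalars
        · ring
        · field_simp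
    choose σ hσ using exσ
    have uniq : ∀ t c : K, (∃ e : K, e ≠ 0 ∧ g (b i₀ + t • b i) = e • (f i₀ + c • f i)) →
        c = σ t := by
      rintro t c ⟨e, he, hE⟩
      obtain ⟨e', he', hE'⟩ := hσ t
      have hEq : φ (e • (b i₀ + c • b i)) = φ (e' • (b i₀ + σ t • b i)) := by
        have h1 : φ (e • (b i₀ + c • b i)) = e • (f i₀ + c • f i) := by
          simp [map_smul, map_add, φb]
        have h2 : φ (e' • (b i₀ + σ t • b i)) = e' • (f i₀ + σ t • f i) := by
          simp [map_smul, map_add, φb]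
        rw [h1, h2, ← hE, ← hE']
      have hV := φinj hEq
      have h₁ := congrArg (fun w => b.repr w i₀) hV
      have h₂ := congrArg (fun w => b.repr w i) hV
      simp [Finsupp.single_apply, hi, Ne.symm hi] at h₁ h₂
      rw [h₁] at h₂
      exact mul_left_cancel₀ he' h₂
    have σ0 : σ 0 = 0 := (uniq 0 0 ⟨1, one_ne_zero, by simp [hfi₀]⟩).symm
    have σ1 : σ 1 = 1 := by
      obtain ⟨a, ha, hkey1⟩ := hkey i hi
      exact (uniq 1 1 ⟨a, ha, by simpa using hkey1⟩).symm
    obtain ⟨cy, hcy, hcyE⟩ := simsymm (hfsim i)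
    obtain ⟨cz, hcz, hczE⟩ := simsymm (hfsim j)
    obtain ⟨axz, haxz, hxz⟩ := hkey j hj'.1
    have hgx : g (b i₀) = f i₀ := hfi₀.symm
    have hxz0 : b i₀ + b j ≠ 0 := by
      simpa using hpair_ne i₀ j (Ne.symm hj'.1) 1 1 one_ne_zero
    have σadd : ∀ s t : K, σ (s + t) = σ s + σ t := by
      intro s t
      obtain ⟨et, het, hEt⟩ := hσ t
      obtain ⟨es, hes, hEs⟩ := hσ s
      have hxty : b i₀ + t • b i ≠ 0 := by
        simpa using hpair_ne i₀ i (Ne.symm hi) 1 t one_ne_zero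
      have hxsy : b i₀ + s • b i ≠ 0 := by
        simpa using hpair_ne i₀ i (Ne.symm hi) 1 s one_ne_zero
      -- the point D = t • b i - b j
      have hD : (t • b i - b j : V) ≠ 0 := by
        refine hrne _ j ?_
        simp [Finsupp.single_apply, hj'.2, Ne.symm hj'.2]
      have hgDne : g (t • b i - b j) ≠ 0 := gne _ hD
      have hD1 : g (t • b i - b j) ∈ span K ({f i, f j} : Set V) := by
        have hmem : (t • b i - b j : V) ∈ span K ({b i, b j} : Set V) :=
          Submodule.mem_span_pair.mpr ⟨t, -1, by module⟩
        have h := hg2 _ _ _ hD (hbne i) (hbne j) hmem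
        rwa [span_pair_congr' ⟨cy, hcy, hcyE⟩ ⟨cz, hcz, hczE⟩] at h
      have hD2 : g (t • b i - b j) ∈ span K ({f i₀ + σ t • f i, f i₀ + f j} : Set V) := by
        have hmem : (t • b i - b j : V) ∈ span K ({b i₀ + t • b i, b i₀ + b j} : Set V) :=
          Submodule.mem_span_pair.mpr ⟨1, -1, by module⟩
        have h := hg2 _ _ _ hD hxty hxz0 hmem
        rwa [span_pair_congr' ⟨et, het, hEt⟩ ⟨axz, haxz, hxz⟩] at h
      obtain ⟨aD, bD, hD3⟩ := Submodule.mem_span_pair.mp hD1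
      obtain ⟨cD, dD, hD4⟩ := Submodule.mem_span_pair.mp hD2
      have hDV : aD • b i + bD • b j = cD • (b i₀ + σ t • b i) + dD • (b i₀ + b j) := by
        apply φinj
        simp only [map_add, map_smul, φb]
        rw [hD3, hD4]
      have e₀ := congrArg (fun w => b.repr w i₀) hDV
      have e₂ := congrArg (fun w => b.repr w j) hDV
      simp [Finsupp.single_apply, hi, hj'.1, hj'.2, Ne.symm hi, Ne.symm hj'.1,
        Ne.symm hj'.2] at e₀ e₂
      -- e₀ : 0 = cD + dD, e₂ : bD = dD
      have hdD : dD = -cD := by linear_combination -e₀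
      have hcD : cD ≠ 0 := by
        rintro rfl
        refine hgDne ?_
        rw [← hD4, hdD]
        simp
      have hgD : g (t • b i - b j) = cD • (σ t • f i - f j) := by
        rw [← hD4, hdD]
        module
      -- the point C = b i₀ + s • b i + b j
      have hC : (b i₀ + s • b i + b j : V) ≠ 0 := by
        simpa using htrip_ne i₀ i j (Ne.symm hi) (Ne.symm hj'.1) (Ne.symm hj'.2)
          1 s 1 one_ne_zero
      have hgCne : g (b i₀ + s • b i + b j) ≠ 0 := gne _ hC
      have hC1 : g (b i₀ + s • b i + b j) ∈ span K ({f i₀ + σ s • f i, f j} : Set V) := by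
        have hmem : (b i₀ + s • b i + b j : V) ∈ span K ({b i₀ + s • b i, b j} : Set V) :=
          Submodule.mem_span_pair.mpr ⟨1, 1, by module⟩
        have h := hg2 _ _ _ hC hxsy (hbne j) hmem
        rwa [span_pair_congr' ⟨es, hes, hEs⟩ ⟨cz, hcz, hczE⟩] at h
      have hC2 : g (b i₀ + s • b i + b j) ∈ span K ({f i₀ + f j, f i} : Set V) := by
        have hmem : (b i₀ + s • b i + b j : V) ∈ span K ({b i₀ + b j, b i} : Set V) :=
          Submodule.mem_span_pair.mpr ⟨1, s, by module⟩
        have h := hg2 _ _ _ hC hxz0 (hbne i) hmem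
        rwa [span_pair_congr' ⟨axz, haxz, hxz⟩ ⟨cy, hcy, hcyE⟩] at h
      obtain ⟨aC, bC, hC3⟩ := Submodule.mem_span_pair.mp hC1
      obtain ⟨cC, dC, hC4⟩ := Submodule.mem_span_pair.mp hC2
      have hCV : aC • (b i₀ + σ s • b i) + bC • b j = cC • (b i₀ + b j) + dC • b i := by
        apply φinj
        simp only [map_add, map_smul, φb]
        rw [hC3, hC4]
      have e₃ := congrArg (fun w => b.repr w i₀) hCV
      have e₅ := congrArg (fun w => b.repr w j) hCV
      simp [Finsupp.single_apply, hi, hj'.1, hj'.2, Ne.symm hi, Ne.symm hj'.1,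
        Ne.symm hj'.2] at e₃ e₅
      -- e₃ : aC = cC, e₅ : bC = cC
      have haC : aC ≠ 0 := by
        rintro rfl
        refine hgCne ?_
        rw [← hC3, e₅, ← e₃]
        simp
      have hgC : g (b i₀ + s • b i + b j) = aC • (f i₀ + σ s • f i + f j) := by
        rw [← hC3, e₅, ← e₃]
        module
      -- the point E = b i₀ + (s+t) • b i
      have hE0 : (b i₀ + (s + t) • b i : V) ≠ 0 := by
        simpa using hpair_ne i₀ i (Ne.symm hi) 1 (s + t) one_ne_zero
      have hE1 : g (b i₀ + (s + t) • b i) ∈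
          span K ({f i₀ + σ s • f i + f j, σ t • f i - f j} : Set V) := by
        have hmem : (b i₀ + (s + t) • b i : V) ∈
            span K ({b i₀ + s • b i + b j, t • b i - b j} : Set V) :=
          Submodule.mem_span_pair.mpr ⟨1, 1, by module⟩
        have h := hg2 _ _ _ hE0 hC hD hmem
        rwa [span_pair_congr' ⟨aC, haC, hgC⟩ ⟨cD, hcD, hgD⟩] at h
      have hE2 : g (b i₀ + (s + t) • b i) ∈ span K ({f i₀, f i} : Set V) := by
        have hmem : (b i₀ + (s + t) • b i : V) ∈ span K ({b i₀, b i} : Set V) :=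
          Submodule.mem_span_pair.mpr ⟨1, s + t, by module⟩
        have h := hg2 _ _ _ hE0 (hbne i₀) (hbne i) hmem
        have hx1 : g (b i₀) = (1 : K) • f i₀ := by rw [one_smul, hgx]
        rwa [span_pair_congr' ⟨1, one_ne_zero, hx1⟩ ⟨cy, hcy, hcyE⟩] at h
      obtain ⟨aE, bE, hE3⟩ := Submodule.mem_span_pair.mp hE1
      obtain ⟨cE, dE, hE4⟩ := Submodule.mem_span_pair.mp hE2
      have hEV : aE • (b i₀ + σ s • b i + b j) + bE • (σ t • b i - b j)
          = cE • b i₀ + dE • b i := by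
        apply φinj
        simp only [map_add, map_sub, map_smul, φb]
        rw [hE3, hE4]
      have e₆ := congrArg (fun w => b.repr w j) hEV
      simp [Finsupp.single_apply, hi, hj'.1, hj'.2, Ne.symm hi, Ne.symm hj'.1,
        Ne.symm hj'.2] at e₆
      -- e₆ : aE - bE = 0 (i.e. aE = bE, shape to be fixed)
      have haE : aE ≠ 0 := by
        rintro rfl
        have hbE0 : bE = 0 := by linear_combination -e₆
        refine gne _ hE0 ?_
        rw [← hE3, hbE0]
        simp
      have hbE : bE = aE := by linear_combination -e₆
      have hgE : g (b i₀ + (s + t) • b i) = aE • (f i₀ + (σ s + σ t) • f i) := by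
        rw [← hE3, hbE]
        module
      exact (uniq (s + t) (σ s + σ t) ⟨aE, haE, hgE⟩).symm
    have σnat : ∀ n : ℕ, σ (n : K) = (n : K) := by
      intro n
      induction n with
      | zero => simpa using σ0
      | succ m ih =>
        have hc : ((m + 1 : ℕ) : K) = (m : K) + 1 := by push_cast; ring
        rw [hc, σadd, ih, σ1]
    intro t
    obtain ⟨n, rfl⟩ := hK t
    obtain ⟨e, he, hE⟩ := hσ (n : K)
    refine ⟨e, he, ?_⟩
    rw [hE, σnat]

  have main : ∀ n : ℕ, ∀ v : V, v ≠ 0 → (b.repr v).support.card ≤ n →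
      ∃ c : K, c ≠ 0 ∧ g v = c • φ v := by
    intro n
    induction n with
    | zero =>
      intro v hv hcard
      exfalso
      apply hv
      have h0 : (b.repr v).support = ∅ :=
        Finset.card_eq_zero.mp (le_antisymm hcard (Nat.zero_le _))
      have h1 : b.repr v = 0 := Finsupp.support_eq_empty.mp h0
      have h2 := congrArg b.repr.symm h1
      simpa using h2
    | succ n IH =>
      intro v hv hcard
      by_cases hn : (b.repr v).support.card ≤ n
      · exact IH v hv hn
      have hcard' : (b.repr v).support.card = n + 1 :=
        le_antisymm hcard (Nat.succ_le_of_lt (not_le.mp hn))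
      by_cases h1c : (b.repr v).support.card = 1
      · -- support has one element
        obtain ⟨i, hi⟩ := Finset.card_eq_one.mp h1c
        obtain ⟨hne0, hrepr⟩ := Finsupp.support_eq_singleton.mp hi
        have hvi : v = b.repr v i • b i := by
          apply b.repr.injective
          rw [map_smul, b.repr_self, Finsupp.smul_single]
          rw [smul_eq_mul, mul_one]
          exact hrepr
        have hsim1 : span K {v} = span K {b i} := sim_span'.mpr ⟨_, hne0, hvi⟩
        obtain ⟨c1, hc1, hgc⟩ := sim_span'.mp (hg1 _ _ hv (hbne i) hsim1)
        obtain ⟨c2, hc2, hfc⟩ := hfsim i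
        have hφv : φ v = (b.repr v i * c2) • g (b i) := by
          conv_lhs => rw [hvi]
          rw [map_smul, φb, hfc, smul_smul]
        refine ⟨c1 / (b.repr v i * c2), div_ne_zero hc1 (mul_ne_zero hne0 hc2), ?_⟩
        rw [hgc, hφv]
        match_scalars
        field_simp
      by_cases h2c : (b.repr v).support.card = 2
      · -- support has two elements
        obtain ⟨i, j, hij, hS⟩ := Finset.card_eq_two.mp h2c
        have hmemi : i ∈ (b.repr v).support := by rw [hS]; simp
        have hmemj : j ∈ (b.repr v).support := by rw [hS]; simp
        have hci : b.repr v i ≠ 0 := Finsupp.mem_support_iff.mp hmemi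
        have hcj : b.repr v j ≠ 0 := Finsupp.mem_support_iff.mp hmemj
        have hvij : v = b.repr v i • b i + b.repr v j • b j := by
          apply b.repr.injective
          simp only [map_add, map_smul, b.repr_self]
          ext l
          by_cases hl : l = i
          · subst hl
            simp [Finsupp.single_apply, Ne.symm hij]
          · by_cases hl2 : l = j
            · subst hl2
              simp [Finsupp.single_apply, hij]
            · have hls : l ∉ (b.repr v).support := by rw [hS]; simp [hl, hl2]
              have h0 : b.repr v l = 0 := Finsupp.notMem_support_iff.mp hls
              simp [Finsupp.single_apply, Ne.symm hl, Ne.symm hl2, h0]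
        by_cases hi₀mem : i = i₀ ∨ j = i₀
        · -- i₀ is in the support
          obtain ⟨m, sc, tc, hm, hsc, htc, hveq⟩ : ∃ (m : ι) (sc tc : K),
              m ≠ i₀ ∧ sc ≠ 0 ∧ tc ≠ 0 ∧ v = sc • b i₀ + tc • b m := by
            rcases hi₀mem with h | h
            · exact ⟨j, b.repr v i, b.repr v j, (by rw [← h]; exact Ne.symm hij),
                hci, hcj, by rw [← h]; exact hvij⟩
            · exact ⟨i, b.repr v j, b.repr v i, (by rw [← h]; exact hij),
                hcj, hci, by rw [← h]; exact hvij.trans (add_comm _ _)⟩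
          have hu : b i₀ + (tc / sc) • b m ≠ 0 := by
            simpa using hpair_ne i₀ m (Ne.symm hm) 1 (tc / sc) one_ne_zero
          have hsim1 : span K {v} = span K {b i₀ + (tc / sc) • b m} :=
            sim_span'.mpr ⟨sc, hsc, by
              rw [hveq]
              match_scalars
              · ring
              · field_simp⟩
          obtain ⟨c1, hc1, hgc⟩ := sim_span'.mp (hg1 _ _ hv hu hsim1)
          obtain ⟨c2, hc2, hgu⟩ := claim1 m hm (tc / sc)
          have hφv : φ v = sc • (f i₀ + (tc / sc) • f m) := by
            conv_lhs => rw [hveq]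
            simp only [map_add, map_smul, φb]
            match_scalars
            · ring
            · field_simp
          refine ⟨c1 * c2 / sc, div_ne_zero (mul_ne_zero hc1 hc2) hsc, ?_⟩
          rw [hgc, hgu, hφv]
          match_scalars <;> (field_simp; try ring)
        · -- i₀ is not in the support
          push_neg at hi₀mem
          obtain ⟨hii₀, hji₀⟩ := hi₀mem
          have hA : b i₀ + b.repr v i • b i ≠ 0 := by
            simpa using hpair_ne i₀ i (Ne.symm hii₀) 1 (b.repr v i) one_ne_zero
          have hB : b i₀ + (- b.repr v j) • b j ≠ 0 := by
            simpa using hpair_ne i₀ j (Ne.symm hji₀) 1 (- b.repr v j) one_ne_zero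
          have hmem1 : v ∈ span K
              ({b i₀ + b.repr v i • b i, b i₀ + (- b.repr v j) • b j} : Set V) :=
            Submodule.mem_span_pair.mpr ⟨1, -1, by
              conv_rhs => rw [hvij]
              module⟩
          obtain ⟨cA, hcA0, hgA⟩ := claim1 i hii₀ (b.repr v i)
          obtain ⟨cB, hcB0, hgB⟩ := claim1 j hji₀ (- b.repr v j)
          have hm1 := hg2 _ _ _ hv hA hB hmem1
          rw [span_pair_congr' ⟨cA, hcA0, hgA⟩ ⟨cB, hcB0, hgB⟩] at hm1
          have hmem2 : v ∈ span K ({b i, b j} : Set V) :=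
            Submodule.mem_span_pair.mpr ⟨_, _, hvij.symm⟩
          have hm2 := hg2 _ _ _ hv (hbne i) (hbne j) hmem2
          rw [span_pair_congr' (simsymm (hfsim i)) (simsymm (hfsim j))] at hm2
          obtain ⟨a1, a2, hm1E⟩ := Submodule.mem_span_pair.mp hm1
          obtain ⟨a3, a4, hm2E⟩ := Submodule.mem_span_pair.mp hm2
          have hVeq : a1 • (b i₀ + b.repr v i • b i) + a2 • (b i₀ + (- b.repr v j) • b j)
              = a3 • b i + a4 • b j := by
            apply φinj
            simp only [map_add, map_smul, φb]
            rw [hm1E, hm2E]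
          have e₀ := congrArg (fun w => b.repr w i₀) hVeq
          simp [Finsupp.single_apply, hii₀, hji₀, Ne.symm hii₀, Ne.symm hji₀, hij,
            Ne.symm hij] at e₀
          have ha2 : a2 = -a1 := by linear_combination e₀
          have ha1 : a1 ≠ 0 := by
            rintro rfl
            have h20 : a2 = 0 := by simpa using ha2
            refine gne _ hv ?_
            rw [← hm1E, h20]
            simp
          refine ⟨a1, ha1, ?_⟩
          have hφv : φ v = b.repr v i • f i + b.repr v j • f j := by
            conv_lhs => rw [hvij]
            simp only [map_add, map_smul, φb]
          rw [← hm1E, ha2, hφv]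
          module
      · -- support has at least three elements
        have h3 : 2 < (b.repr v).support.card := by omega
        obtain ⟨i, hi, j, hj2, hij⟩ := Finset.one_lt_card.mp
          (by omega : 1 < (b.repr v).support.card)
        have hci : b.repr v i ≠ 0 := Finsupp.mem_support_iff.mp hi
        have hcj : b.repr v j ≠ 0 := Finsupp.mem_support_iff.mp hj2
        set u1 : V := b.repr v i • b i with hu1def
        set u2 : V := b.repr v i • b i + b.repr v j • b j with hu2def
        set w1 : V := v - u1 with hw1def
        set w2 : V := v - u2 with hw2def
        clear_value u1 u2 w1 w2
        have hru1 : b.repr u1 = Finsupp.single i (b.repr v i) := by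
          rw [hu1def, map_smul, b.repr_self, Finsupp.smul_single, smul_eq_mul, mul_one]
        have hru2 : b.repr u2 = Finsupp.single i (b.repr v i) + Finsupp.single j (b.repr v j) := by
          rw [hu2def, map_add, map_smul, map_smul, b.repr_self, b.repr_self,
            Finsupp.smul_single, Finsupp.smul_single, smul_eq_mul, smul_eq_mul, mul_one, mul_one]
        have hrw1 : b.repr w1 = b.repr v - Finsupp.single i (b.repr v i) := by
          rw [hw1def, map_sub, hru1]
        have hrw2 : b.repr w2 = b.repr v
            - (Finsupp.single i (b.repr v i) + Finsupp.single j (b.repr v j)) := by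
          rw [hw2def, map_sub, hru2]
        have hw1supp : (b.repr w1).support = (b.repr v).support.erase i := by
          ext l
          rw [Finsupp.mem_support_iff, Finset.mem_erase, Finsupp.mem_support_iff, hrw1]
          by_cases hl : l = i
          · subst hl; simp [Finsupp.single_apply]
          · simp [Finsupp.sub_apply, Finsupp.single_apply, hl, Ne.symm hl]
        have hw2supp : (b.repr w2).support = ((b.repr v).support.erase i).erase j := by
          ext l
          rw [Finsupp.mem_support_iff, Finset.mem_erase, Finset.mem_erase,
            Finsupp.mem_support_iff, hrw2]
          by_cases hl : l = i
          · subst hl; simp [Finsupp.single_apply, Ne.symm hij]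
          · by_cases hl2 : l = j
            · subst hl2; simp [Finsupp.single_apply, hij]
            · simp [Finsupp.sub_apply, Finsupp.single_apply, hl, hl2, Ne.symm hl, Ne.symm hl2]
        have hu1ne : u1 ≠ 0 := by rw [hu1def]; exact smul_ne_zero hci (hbne i)
        have hu2ne : u2 ≠ 0 := by
          refine hrne _ i ?_
          rw [hru2]
          simp [Finsupp.single_apply, Ne.symm hij, hci]
        have hw1ne : w1 ≠ 0 := by
          refine hrne _ j ?_
          rw [hrw1]
          simp [Finsupp.sub_apply, Finsupp.single_apply, hij, Ne.symm hij, hcj]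
        have hw2ne : w2 ≠ 0 := by
          obtain ⟨l, hl⟩ : (((b.repr v).support.erase i).erase j).Nonempty := by
            rw [← Finset.card_pos]
            have e2 : j ∈ (b.repr v).support.erase i := Finset.mem_erase.mpr ⟨Ne.symm hij, hj2⟩
            rw [Finset.card_erase_of_mem e2, Finset.card_erase_of_mem hi, hcard']
            omega
          refine hrne _ l ?_
          exact Finsupp.mem_support_iff.mp (hw2supp ▸ hl)
        have hcu1 : (b.repr u1).support.card ≤ n := by
          rw [hru1, Finsupp.support_single_ne_zero _ hci]
          simp only [Finset.card_singleton]
          omega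
        have hcu2 : (b.repr u2).support.card ≤ n := by
          rw [hru2]
          refine le_trans (Finset.card_le_card Finsupp.support_add) ?_
          refine le_trans (Finset.card_union_le _ _) ?_
          have s1 := Finset.card_le_card (Finsupp.support_single_subset
            (a := i) (b := b.repr v i))
          have s2 := Finset.card_le_card (Finsupp.support_single_subset
            (a := j) (b := b.repr v j))
          simp only [Finset.card_singleton] at s1 s2
          omega
        have hcw1 : (b.repr w1).support.card ≤ n := by
          rw [hw1supp, Finset.card_erase_of_mem hi, hcard']
          omega
        have hcw2 : (b.repr w2).support.card ≤ n := by
          rw [hw2supp]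
          refine le_trans Finset.card_erase_le ?_
          rw [Finset.card_erase_of_mem hi, hcard']
          omega
        obtain ⟨α1, hα1, hgu1⟩ := IH _ hu1ne hcu1
        obtain ⟨β1, hβ1, hgw1⟩ := IH _ hw1ne hcw1
        obtain ⟨α2, hα2, hgu2⟩ := IH _ hu2ne hcu2
        obtain ⟨β2, hβ2, hgw2⟩ := IH _ hw2ne hcw2
        have hmem1 : v ∈ span K ({u1, w1} : Set V) :=
          Submodule.mem_span_pair.mpr ⟨1, 1, by rw [hw1def]; module⟩
        have hmem2 : v ∈ span K ({u2, w2} : Set V) :=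
          Submodule.mem_span_pair.mpr ⟨1, 1, by rw [hw2def]; module⟩
        have hm1 := hg2 _ _ _ hv hu1ne hw1ne hmem1
        have hm2 := hg2 _ _ _ hv hu2ne hw2ne hmem2
        rw [span_pair_congr' ⟨α1, hα1, hgu1⟩ ⟨β1, hβ1, hgw1⟩] at hm1
        rw [span_pair_congr' ⟨α2, hα2, hgu2⟩ ⟨β2, hβ2, hgw2⟩] at hm2
        obtain ⟨a1, c1, hm1E⟩ := Submodule.mem_span_pair.mp hm1
        obtain ⟨a2, c2, hm2E⟩ := Submodule.mem_span_pair.mp hm2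
        have hVeq : a1 • u1 + c1 • w1 = a2 • u2 + c2 • w2 := by
          apply φinj
          rw [map_add, map_add, map_smul, map_smul, map_smul, map_smul, hm1E, hm2E]
        have ei := congrArg (fun w => b.repr w i) hVeq
        have ej := congrArg (fun w => b.repr w j) hVeq
        simp [hru1, hru2, hrw1, hrw2, Finsupp.single_apply, hij, Ne.symm hij] at ei ej
        have h12 : a1 = a2 := ei.resolve_right hci
        have h13 : c1 = a2 := ej.resolve_right hcj
        have ha1 : a1 ≠ 0 := by
          rintro rfl
          refine gne _ hv ?_
          rw [← hm1E, h13, ← h12]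
          simp
        refine ⟨a1, ha1, ?_⟩
        have hsum : u1 + w1 = v := by rw [hw1def]; module
        rw [← hm1E, h13, ← h12, ← smul_add, ← map_add, hsum]
  have hbij : Function.Bijective φ := by
    constructor
    · exact φinj
    · intro w
      by_cases hw : w = 0
      · exact ⟨0, by simp [hw]⟩
      · have hsw : g.symm w ≠ 0 := gne' _ hw
        obtain ⟨c, hc, hgc⟩ := main ((b.repr (g.symm w)).support.card) (g.symm w) hsw le_rfl
        refine ⟨c • g.symm w, ?_⟩
        rw [map_smul, ← hgc, Equiv.apply_symm_apply]
  refine ⟨LinearEquiv.ofBijective φ hbij, ?_⟩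
  intro v
  by_cases hv : v = 0
  · subst hv
    rw [hg0]
    simp
  · obtain ⟨c, hc, hgc⟩ := main ((b.repr v).support.card) v hv le_rfl
    have hco : (LinearEquiv.ofBijective φ hbij) v = φ v := rfl
    rw [hco]
    exact sim_span'.mpr ⟨c, hc, hgc⟩

/-- If `G` (closed, containing `Aut(V)`, fixing `0`) preserves the relation of
spanning the same line and preserves projective lines, then `G` acts on the
one-dimensional subspaces of `V` like `Aut(V)`. -/
theorem stmt_3 (p : ℕ) [Fact p.Prime] (hp : p ≠ 2)
    (V : Type*) [AddCommGroup V] [Module (ZMod p) V] [Countable V] [Infinite V]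
    (G : Subgroup (Equiv.Perm V))
    (hclosed : ∀ f : Equiv.Perm V, (∀ F : Finset V, ∃ g ∈ G, ∀ x ∈ F, g x = f x) → f ∈ G)
    (hAut : ∀ φ : V ≃ₗ[ZMod p] V, (φ.toEquiv : Equiv.Perm V) ∈ G)
    (hzero : ∀ g ∈ G, g 0 = (0 : V))
    (h1 : ∀ g ∈ G, ∀ v w : V, v ≠ 0 → w ≠ 0 →
      Submodule.span (ZMod p) {v} = Submodule.span (ZMod p) {w} →
      Submodule.span (ZMod p) {g v} = Submodule.span (ZMod p) {g w})
    (h2 : ∀ g ∈ G, ∀ u v w : V, u ≠ 0 → v ≠ 0 → w ≠ 0 →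
      (u ∈ Submodule.span (ZMod p) ({v, w} : Set V) ↔
        g u ∈ Submodule.span (ZMod p) ({g v, g w} : Set V))) :
    ∀ g ∈ G, ∃ φ : V ≃ₗ[ZMod p] V, ∀ v : V,
      Submodule.span (ZMod p) {g v} = Submodule.span (ZMod p) {φ v} := by
  classical
  intro g hg
  haveI : NeZero p := ⟨(Fact.out : p.Prime).ne_zero⟩
  set b := Module.Basis.ofVectorSpace (ZMod p) V with hb
  haveI : Infinite (Module.Basis.ofVectorSpaceIndex (ZMod p) V) := by
    by_contra hfin
    haveI : Finite (Module.Basis.ofVectorSpaceIndex (ZMod p) V) := not_infinite_iff_finite.mp hfin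
    haveI : Module.Finite (ZMod p) V := Module.Finite.of_basis b
    haveI : Finite V := Module.finite_of_finite (ZMod p)
    exact not_finite V
  have hK : ∀ t : ZMod p, ∃ n : ℕ, (n : ZMod p) = t :=
    fun t => ⟨t.val, ZMod.natCast_rightInverse t⟩
  obtain ⟨φ, hφ⟩ := aux_main hK b g (hzero g hg)
    (h1 g hg)
    (by intro v w hv hw hsp
        have := h1 g⁻¹ (inv_mem hg) v w hv hw hsp
        simpa using this)
    (fun u v w hu hv hw hm => (h2 g hg u v w hu hv hw).mp hm)
    (by intro u v w hu hv hw hm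
        have := (h2 g⁻¹ (inv_mem hg) u v w hu hv hw).mp hm
        simpa using this)
  exact ⟨φ, hφ⟩
end

section
/- Let S be a finite subset of V, let v ∈ V, let G_S = {g ∈ G | ∀ s ∈ S, g s = s} be the pointwise stabilizer of S in G, and let O = {g v | g ∈ G_S} be the orbit of v under G_S. Then the following are equivalent: (1) O is infinite; (2) O contains some vector u with u ∉ Submodule.span (ZMod p) S; (3) every vector of V not lying in Submodule.span (ZMod p) S belongs to O. -/
open Submodule

section Aux
variable {K : Type*} [Field K] {V : Type*} [AddCommGroup V] [Module K V]

/-- On a linearly independent set, there is a functional that is `1` at a chosen point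
and `0` at all other points of the set. -/
lemma aux_functional {T : Set V} (hT : LinearIndependent K ((↑) : T → V))
    {u : V} (hu : u ∈ T) :
    ∃ f : V →ₗ[K] K, f u = 1 ∧ ∀ x ∈ T, x ≠ u → f x = 0 := by
  classical
  have hT' : LinearIndepOn K id T := hT
  set b := Module.Basis.extend hT' with hb
  have hmem : ∀ x ∈ T, x ∈ hT'.extend (Set.subset_univ T) :=
    fun x hx => hT'.subset_extend _ hx
  refine ⟨b.coord ⟨u, hmem u hu⟩, ?_, ?_⟩
  · have h1 : b ⟨u, hmem u hu⟩ = u := Module.Basis.extend_apply_self hT' _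
    have : (b.coord ⟨u, hmem u hu⟩) (b ⟨u, hmem u hu⟩) = 1 := by
      simp [Module.Basis.coord_apply, Module.Basis.repr_self]
    rwa [h1] at this
  · intro x hx hxu
    have h1 : b ⟨x, hmem x hx⟩ = x := Module.Basis.extend_apply_self hT' _
    have : (b.coord ⟨u, hmem u hu⟩) (b ⟨x, hmem x hx⟩) = 0 := by
      rw [Module.Basis.coord_apply, Module.Basis.repr_self, Finsupp.single_apply]
      simp [Subtype.ext_iff, hxu]
    rwa [h1] at this

/-- A "transvection-like" automorphism `x ↦ x + f x • d`, invertible when `1 + f d ≠ 0`. -/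
lemma aux_equiv (f : V →ₗ[K] K) (d : V) (hc : 1 + f d ≠ 0) :
    ∃ φ : V ≃ₗ[K] V, ∀ x, φ x = x + f x • d := by
  set c := 1 + f d with hcdef
  have hc' : c ≠ 0 := hc
  refine ⟨LinearEquiv.ofLinear
    (LinearMap.id + (LinearMap.toSpanSingleton K V d).comp f)
    (LinearMap.id - (LinearMap.toSpanSingleton K V d).comp (c⁻¹ • f)) ?_ ?_, ?_⟩
  · ext x
    simp only [LinearMap.comp_apply, LinearMap.add_apply, LinearMap.sub_apply,
      LinearMap.id_apply, LinearMap.id_coe, id_eq, LinearMap.smul_apply,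
      LinearMap.toSpanSingleton_apply, map_sub, map_smul, smul_eq_mul]
    match_scalars <;> field_simp <;> ring
  · ext x
    simp only [LinearMap.comp_apply, LinearMap.add_apply, LinearMap.sub_apply,
      LinearMap.id_apply, LinearMap.id_coe, id_eq, LinearMap.smul_apply,
      LinearMap.toSpanSingleton_apply, map_add, map_smul, smul_eq_mul]
    match_scalars <;> field_simp <;> ring
  · intro x
    simp [LinearMap.toSpanSingleton_apply]

/-- Linear automorphisms fixing `span S` pointwise act transitively outside `span S`. -/
lemma aux_trans {S : Set V} {u w : V}
    (hu : u ∉ span K S) (hw : w ∉ span K S) :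
    ∃ φ : V ≃ₗ[K] V, (∀ x ∈ span K S, φ x = x) ∧ φ u = w := by
  obtain ⟨B, hBS, hBspan, hBli⟩ := exists_linearIndependent K S
  rw [← hBspan] at hu hw
  have hli1 := LinearIndepOn.id_insert hBli hu
  have key : ∃ f : V →ₗ[K] K, f u = 1 ∧ f w ≠ 0 ∧ ∀ x ∈ B, f x = 0 := by
    by_cases hw2 : w ∈ span K (insert u B : Set V)
    · obtain ⟨f, hfu, hf0⟩ := aux_functional hli1 (Set.mem_insert u B)
      have hB0 : ∀ x ∈ B, f x = 0 := fun x hx =>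
        hf0 x (Set.mem_insert_of_mem _ hx)
          (by rintro rfl; exact hu (Submodule.subset_span hx))
      refine ⟨f, hfu, ?_, hB0⟩
      obtain ⟨a, z, hz, rfl⟩ := Submodule.mem_span_insert.mp hw2
      have hz0 : f z = 0 := by
        have hle : span K B ≤ LinearMap.ker f :=
          Submodule.span_le.mpr fun y hy => hB0 y hy
        exact hle hz
      have ha : a ≠ 0 := by
        rintro rfl
        exact hw (by simpa using hz)
      simp [map_add, map_smul, hfu, hz0, ha]
    · have huw : u ≠ w := by
        rintro rfl; exact hw2 (Submodule.subset_span (Set.mem_insert u B))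
      have hli2 := LinearIndepOn.id_insert hli1 hw2
      obtain ⟨f1, hf1u, hf10⟩ :=
        aux_functional hli2 (Set.mem_insert_of_mem _ (Set.mem_insert u B))
      obtain ⟨f2, hf2w, hf20⟩ := aux_functional hli2 (Set.mem_insert w _)
      have hf2u : f2 u = 0 :=
        hf20 u (Set.mem_insert_of_mem _ (Set.mem_insert u B)) huw
      have hf1w : f1 w = 0 := hf10 w (Set.mem_insert w _) (Ne.symm huw)
      refine ⟨f1 + f2, ?_, ?_, ?_⟩
      · simp [hf1u, hf2u]
      · simp [hf1w, hf2w]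
      · intro x hx
        have hxu : x ≠ u := by rintro rfl; exact hu (Submodule.subset_span hx)
        have hxw : x ≠ w := by
          rintro rfl
          exact hw2 (Submodule.subset_span (Set.mem_insert_of_mem _ hx))
        have h1 : f1 x = 0 :=
          hf10 x (Set.mem_insert_of_mem _ (Set.mem_insert_of_mem _ hx)) hxu
        have h2 : f2 x = 0 :=
          hf20 x (Set.mem_insert_of_mem _ (Set.mem_insert_of_mem _ hx)) hxw
        simp [h1, h2]
  obtain ⟨f, hfu, hfw, hfB⟩ := key
  have hfspan : ∀ x ∈ span K B, f x = 0 := by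
    intro x hx
    have hle : span K B ≤ LinearMap.ker f :=
      Submodule.span_le.mpr fun y hy => hfB y hy
    exact hle hx
  have hc : 1 + f (w - u) ≠ 0 := by
    rw [map_sub, hfu]
    simpa using hfw
  obtain ⟨φ, hφ⟩ := aux_equiv f (w - u) hc
  refine ⟨φ, ?_, ?_⟩
  · intro x hx
    rw [hφ, hfspan x (hBspan ▸ hx), zero_smul, add_zero]
  · rw [hφ, hfu, one_smul, add_sub_cancel]

end Aux

/-- For a finite set `S ⊆ V` and `v ∈ V`, the orbit of `v` under the pointwise
stabilizer of `S` in `G` is infinite iff it contains some vector outside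
`span S` iff it contains every vector outside `span S`. -/
theorem stmt_5 (p : ℕ) [Fact p.Prime] (hp : p ≠ 2)
    (V : Type*) [AddCommGroup V] [Module (ZMod p) V] [Countable V] [Infinite V]
    (G : Subgroup (Equiv.Perm V))
    (hclosed : ∀ f : Equiv.Perm V, (∀ F : Finset V, ∃ g ∈ G, ∀ x ∈ F, g x = f x) → f ∈ G)
    (hAut : ∀ φ : V ≃ₗ[ZMod p] V, (φ.toEquiv : Equiv.Perm V) ∈ G)
    (hzero : ∀ g ∈ G, g 0 = (0 : V))
    (S : Finset V) (v : V) :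
    ({u : V | ∃ g ∈ G, (∀ s ∈ S, g s = s) ∧ g v = u}.Infinite ↔
      ∃ u ∈ {u : V | ∃ g ∈ G, (∀ s ∈ S, g s = s) ∧ g v = u},
        u ∉ Submodule.span (ZMod p) (S : Set V)) ∧
    ({u : V | ∃ g ∈ G, (∀ s ∈ S, g s = s) ∧ g v = u}.Infinite ↔
      ∀ u : V, u ∉ Submodule.span (ZMod p) (S : Set V) →
        u ∈ {u : V | ∃ g ∈ G, (∀ s ∈ S, g s = s) ∧ g v = u}) := by
  set O := {u : V | ∃ g ∈ G, (∀ s ∈ S, g s = s) ∧ g v = u} with hO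
  set W := Submodule.span (ZMod p) (S : Set V) with hW
  have hWfin : ((W : Set V)).Finite := by
    have h1 : Module.Finite (ZMod p) W := Module.Finite.span_of_finite _ S.finite_toSet
    have h2 : Finite W := Module.finite_of_finite (ZMod p)
    exact Set.toFinite _
  have h12 : O.Infinite → ∃ u ∈ O, u ∉ W := by
    intro h
    by_contra hcon
    push_neg at hcon
    exact h (hWfin.subset fun u hu => hcon u hu)
  have h23 : (∃ u ∈ O, u ∉ W) → ∀ w : V, w ∉ W → w ∈ O := by
    rintro ⟨u, ⟨g, hg, hgS, hgv⟩, hu⟩ w hw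
    obtain ⟨φ, hφfix, hφu⟩ := aux_trans hu hw
    refine ⟨(φ.toEquiv : Equiv.Perm V) * g, G.mul_mem (hAut φ) hg, ?_, ?_⟩
    · intro s hs
      have h1 : (φ.toEquiv : Equiv.Perm V) (g s) = φ s := by rw [hgS s hs]; rfl
      rw [Equiv.Perm.mul_apply, h1]
      exact hφfix s (Submodule.subset_span hs)
    · rw [Equiv.Perm.mul_apply, hgv]
      show φ u = w
      exact hφu
  have h31 : (∀ w : V, w ∉ W → w ∈ O) → O.Infinite := by
    intro h
    have hinf : ((W : Set V))ᶜ.Infinite := hWfin.infinite_compl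
    exact hinf.mono fun x hx => h x hx
  exact ⟨⟨h12, fun h => h31 (h23 h)⟩, ⟨fun h => h23 (h12 h), h31⟩⟩
end

section
/- Let S ⊆ V with 0 ∉ S and let k ≥ 1. Then exactly one of the following holds: (1) A_k(S) = ∅; (2) there exist a submodule W of V with finrank (ZMod p) W = k and g ∈ G such that A_k(S) = {g x | x ∈ W}; (3) A_k(S) = V. -/
/-- `Ak p V G k S` is the set of vectors `v` such that `{v} ∪ S` can be mapped
into a `k`-dimensional subspace of `V` by an element of `G`. -/
def Ak (p : ℕ) (V : Type*) [AddCommGroup V] [Module (ZMod p) V]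
    (G : Subgroup (Equiv.Perm V)) (k : ℕ) (S : Set V) : Set V :=
  {v : V | ∃ g ∈ G, ∃ W : Submodule (ZMod p) V,
    Module.finrank (ZMod p) W = k ∧ g v ∈ W ∧ ∀ s ∈ S, g s ∈ W}

open Module Submodule Set

section Aux

variable {F : Type*} [Field F] {V : Type*} [AddCommGroup V] [Module F V]

lemma aux_exists_dual (U : Submodule F V) {y : V} (hy : y ∉ U) :
    ∃ f : V →ₗ[F] F, (∀ u ∈ U, f u = 0) ∧ f y = 1 := by
  obtain ⟨f, hfy, hfU⟩ := U.exists_dual_map_eq_bot_of_notMem hy inferInstance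
  refine ⟨(f y)⁻¹ • f, fun u hu => ?_, ?_⟩
  · have h : f u ∈ U.map f := ⟨u, hu, rfl⟩
    rw [hfU, Submodule.mem_bot] at h
    simp [h]
  · simp [inv_mul_cancel₀ hfy]

lemma aux_swap (U : Submodule F V) {v x : V} (hv : v ∉ U)
    (hx : x ∉ U ⊔ Submodule.span F {v}) :
    ∃ α : V ≃ₗ[F] V, (∀ u ∈ U, α u = u) ∧ α v = x := by
  obtain ⟨f1, hf1U, hf1v⟩ := aux_exists_dual U hv
  obtain ⟨f2, hf2U, hf2x⟩ := aux_exists_dual _ hx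
  set f : V →ₗ[F] F := f1 - (f1 x + 1) • f2 with hf
  have hfU : ∀ u ∈ U, f u = 0 := fun u hu => by
    simp [hf, hf1U u hu, hf2U u (Submodule.mem_sup_left hu)]
  have hfv : f v = 1 := by
    have h2 : f2 v = 0 :=
      hf2U v (Submodule.mem_sup_right (Submodule.mem_span_singleton_self v))
    simp [hf, hf1v, h2]
  have hfx : f x = -1 := by simp [hf, hf2x]
  have hz : f (x - v) = -2 := by rw [map_sub, hfx, hfv]; ring
  set m : V →ₗ[F] V := LinearMap.id + f.smulRight (x - v) with hm
  have happ : ∀ y, m y = y + f y • (x - v) := fun y => by simp [hm]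
  have hinv : Function.Involutive m := by
    intro y
    rw [happ, happ, map_add, map_smul, hz, smul_eq_mul]
    have h2 : f y + f y * (-2) = -(f y) := by ring
    rw [h2, add_assoc, ← add_smul, add_neg_cancel, zero_smul, add_zero]
  refine ⟨LinearEquiv.ofInvolutive m hinv, fun u hu => ?_, ?_⟩
  · show m u = u
    rw [happ, hfU u hu, zero_smul, add_zero]
  · show m v = x
    rw [happ, hfv, one_smul, add_sub_cancel]

lemma aux_fd_finite [Finite F] (U : Submodule F V) [FiniteDimensional F U] :
    (U : Set V).Finite := by
  haveI : Finite U := Module.finite_of_finite F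
  exact Set.toFinite _

lemma aux_move [Infinite V] [Finite F] (U : Submodule F V) [FiniteDimensional F U]
    {v x : V} (hv : v ∉ U) (hx : x ∉ U) :
    ∃ α : V ≃ₗ[F] V, (∀ u ∈ U, α u = u) ∧ α v = x := by
  by_cases hvx : v = x
  · exact ⟨LinearEquiv.refl F V, fun u _ => rfl, hvx⟩
  have hbig : ((U ⊔ span F {v} ⊔ span F {x} : Submodule F V) : Set V).Finite :=
    aux_fd_finite _
  obtain ⟨w, hw⟩ := hbig.infinite_compl.nonempty
  have hw' : w ∉ (U ⊔ span F {v} ⊔ span F {x} : Submodule F V) := hw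
  have hwv : w ∉ U ⊔ span F {v} := fun h => hw' (Submodule.mem_sup_left h)
  have hwU : w ∉ U := fun h => hwv (Submodule.mem_sup_left h)
  have hxw : x ∉ U ⊔ span F {w} := by
    intro h
    rw [Submodule.mem_sup] at h
    obtain ⟨u, hu, z, hz, hxe⟩ := h
    rw [Submodule.mem_span_singleton] at hz
    obtain ⟨c, rfl⟩ := hz
    by_cases hc : c = 0
    · apply hx
      rw [← hxe, hc, zero_smul, add_zero]
      exact hu
    · apply hw'
      have : w = c⁻¹ • (x - u) := by
        rw [← hxe]; simp [smul_smul, inv_mul_cancel₀ hc]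
      rw [this]
      refine Submodule.smul_mem _ _ (Submodule.sub_mem _ ?_ ?_)
      · exact Submodule.mem_sup_right (Submodule.mem_span_singleton_self x)
      · exact Submodule.mem_sup_left (Submodule.mem_sup_left hu)
  obtain ⟨α1, hα1U, hα1v⟩ := aux_swap U hv hwv
  obtain ⟨α2, hα2U, hα2w⟩ := aux_swap U hwU hxw
  exact ⟨α1.trans α2, fun u hu => by
    simp only [LinearEquiv.trans_apply, hα1U u hu, hα2U u hu], by
    simp only [LinearEquiv.trans_apply, hα1v, hα2w]⟩

lemma aux_extend [Infinite V] [Finite F] (k : ℕ) :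
    ∀ (m : ℕ) (U : Submodule F V) [FiniteDimensional F U], finrank F ↥U + m = k →
      ∃ W : Submodule F V, U ≤ W ∧ finrank F ↥W = k := by
  intro m
  induction m with
  | zero => exact fun U _ h => ⟨U, le_rfl, by simpa using h⟩
  | succ n ih =>
    intro U _ h
    obtain ⟨y, hy⟩ := (aux_fd_finite U).infinite_compl.nonempty
    have hyU : y ∉ U := hy
    have hy0 : y ≠ 0 := fun h0 => hyU (h0 ▸ U.zero_mem)
    set U' : Submodule F V := U ⊔ span F {y} with hU'
    haveI : FiniteDimensional F U' := Submodule.finiteDimensional_sup _ _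
    have hyU' : y ∈ U' := Submodule.mem_sup_right (Submodule.mem_span_singleton_self y)
    have hlt : U < U' := lt_of_le_of_ne le_sup_left (fun hEq => hyU (hEq ▸ hyU'))
    have hle : finrank F ↥U' ≤ finrank F ↥U + 1 := by
      calc finrank F ↥U' ≤ finrank F ↥U + finrank F ↥(span F {y}) :=
            Submodule.finrank_add_le_finrank_add_finrank _ _
      _ = finrank F ↥U + 1 := by rw [finrank_span_singleton hy0]
    have hlt' : finrank F ↥U < finrank F ↥U' := Submodule.finrank_lt_finrank_of_lt hlt
    have heq : finrank F ↥U' = finrank F ↥U + 1 := le_antisymm hle hlt'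
    obtain ⟨W, hW1, hW2⟩ := ih U' (by omega)
    exact ⟨W, le_trans le_sup_left hW1, hW2⟩

end Aux

lemma mem_Ak_iff {p : ℕ} {V : Type*} [AddCommGroup V] [Module (ZMod p) V]
    {G : Subgroup (Equiv.Perm V)} {k : ℕ} {S : Set V} {v : V} :
    v ∈ Ak p V G k S ↔ ∃ g ∈ G, ∃ W : Submodule (ZMod p) V,
      Module.finrank (ZMod p) W = k ∧ g v ∈ W ∧ ∀ s ∈ S, g s ∈ W := Iff.rfl

/-- For `S ⊆ V` with `0 ∉ S` and `k ≥ 1`, exactly one of the following holds: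
`A_k(S)` is empty, `A_k(S)` is the image of a `k`-dimensional subspace under an
element of `G`, or `A_k(S) = V`. -/
theorem stmt_6 (p : ℕ) [Fact p.Prime] (hp : p ≠ 2)
    (V : Type*) [AddCommGroup V] [Module (ZMod p) V] [Countable V] [Infinite V]
    (G : Subgroup (Equiv.Perm V))
    (hclosed : ∀ f : Equiv.Perm V, (∀ F : Finset V, ∃ g ∈ G, ∀ x ∈ F, g x = f x) → f ∈ G)
    (hAut : ∀ φ : V ≃ₗ[ZMod p] V, (φ.toEquiv : Equiv.Perm V) ∈ G)
    (hzero : ∀ g ∈ G, g 0 = (0 : V))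
    (S : Set V) (hS : (0 : V) ∉ S) (k : ℕ) (hk : 1 ≤ k) :
    (Ak p V G k S = ∅ ∧
      ¬ (∃ W : Submodule (ZMod p) V, Module.finrank (ZMod p) W = k ∧
          ∃ g ∈ G, Ak p V G k S = (fun x => g x) '' (W : Set V)) ∧
      Ak p V G k S ≠ Set.univ) ∨
    (Ak p V G k S ≠ ∅ ∧
      (∃ W : Submodule (ZMod p) V, Module.finrank (ZMod p) W = k ∧
          ∃ g ∈ G, Ak p V G k S = (fun x => g x) '' (W : Set V)) ∧
      Ak p V G k S ≠ Set.univ) ∨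
    (Ak p V G k S ≠ ∅ ∧
      ¬ (∃ W : Submodule (ZMod p) V, Module.finrank (ZMod p) W = k ∧
          ∃ g ∈ G, Ak p V G k S = (fun x => g x) '' (W : Set V)) ∧
      Ak p V G k S = Set.univ) := by
  classical
  haveI : NeZero p := ⟨(Fact.out : p.Prime).ne_zero⟩
  -- finite-dimensionality of any k-dimensional submodule
  have fdW : ∀ W : Submodule (ZMod p) V, Module.finrank (ZMod p) W = k →
      FiniteDimensional (ZMod p) W := fun W hW =>
    FiniteDimensional.of_finrank_pos (by rw [hW]; omega)
  -- an image of a k-dimensional submodule is finite, hence not univ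
  have himg_ne_univ : ∀ (hyp : ∃ W : Submodule (ZMod p) V, Module.finrank (ZMod p) W = k ∧
      ∃ g ∈ G, Ak p V G k S = (fun x => g x) '' (W : Set V)), Ak p V G k S ≠ Set.univ := by
    rintro ⟨W, hWk, g, hg, hEq⟩ hUniv
    haveI := fdW W hWk
    have hfin : (Set.univ : Set V).Finite := by
      rw [← hUniv, hEq]
      exact (aux_fd_finite W).image _
    exact Set.infinite_univ hfin
  by_cases hA : Ak p V G k S = ∅
  · left
    refine ⟨hA, ?_, ?_⟩
    · rintro ⟨W, hWk, g, hg, hEq⟩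
      have h0 : (0 : V) ∈ Ak p V G k S := by
        rw [hEq]
        exact ⟨0, W.zero_mem, hzero g hg⟩
      rw [hA] at h0
      exact h0
    · rw [hA]
      exact Set.empty_ne_univ
  · obtain ⟨v0, hv0⟩ := Set.nonempty_iff_ne_empty.mpr hA
    rw [mem_Ak_iff] at hv0
    obtain ⟨g0, hg0, W0, hW0k, _, hg0S⟩ := hv0
    haveI : FiniteDimensional (ZMod p) W0 := fdW W0 hW0k
    set T : Set V := (fun s => g0 s) '' S with hT
    set M : Submodule (ZMod p) V := Submodule.span (ZMod p) T with hM
    have hTW0 : M ≤ W0 := Submodule.span_le.mpr (by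
      rintro t ⟨s, hs, rfl⟩
      exact hg0S s hs)
    haveI : FiniteDimensional (ZMod p) M := Submodule.finiteDimensional_of_le hTW0
    have hMk : Module.finrank (ZMod p) M ≤ k := hW0k ▸ Submodule.finrank_mono hTW0
    by_cases hdk : Module.finrank (ZMod p) M = k
    · -- span of the image is all of W0
      have hMW0 : M = W0 := Submodule.eq_of_le_of_finrank_eq hTW0 (by rw [hdk, hW0k])
      by_cases hall : ∀ g' ∈ G, ∀ W' : Submodule (ZMod p) V,
          Module.finrank (ZMod p) W' = k → (∀ t ∈ T, g' t ∈ W') →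
          ∀ y : V, g' y ∈ W' → y ∈ W0
      · -- case 2 : Ak is the image of W0 under g0⁻¹
        right; left
        have hAeq : Ak p V G k S = (fun x => (g0⁻¹ : Equiv.Perm V) x) '' (W0 : Set V) := by
          ext v
          constructor
          · intro hv
            rw [mem_Ak_iff] at hv
            obtain ⟨g, hg, W, hWk, hvW, hSW⟩ := hv
            have key : g0 v ∈ W0 := by
              refine hall (g * g0⁻¹) (G.mul_mem hg (G.inv_mem hg0)) W hWk ?_ (g0 v) ?_
              · rintro t ⟨s, hs, rfl⟩
                simpa [Equiv.Perm.mul_apply] using hSW s hs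
              · simpa [Equiv.Perm.mul_apply] using hvW
            exact ⟨g0 v, key, by simp⟩
          · rintro ⟨w, hw, rfl⟩
            rw [mem_Ak_iff]
            exact ⟨g0, hg0, W0, hW0k, by simpa using hw, hg0S⟩
        have hI : ∃ W : Submodule (ZMod p) V, Module.finrank (ZMod p) W = k ∧
            ∃ g ∈ G, Ak p V G k S = (fun x => g x) '' (W : Set V) :=
          ⟨W0, hW0k, (g0⁻¹ : Equiv.Perm V), G.inv_mem hg0, hAeq⟩
        exact ⟨hA, hI, himg_ne_univ hI⟩
      · -- case 3 : Ak = univ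
        right; right
        push_neg at hall
        obtain ⟨g1, hg1, W1, hW1k, hTW1, y, hyW1, hyW0⟩ := hall
        have hAuniv : Ak p V G k S = Set.univ := by
          ext v
          simp only [Set.mem_univ, iff_true]
          rw [mem_Ak_iff]
          by_cases hvW0 : g0 v ∈ W0
          · exact ⟨g0, hg0, W0, hW0k, hvW0, hg0S⟩
          · obtain ⟨α, hαU, hαv⟩ := aux_move W0 hvW0 hyW0
            refine ⟨g1 * (α.toEquiv : Equiv.Perm V) * g0,
              G.mul_mem (G.mul_mem hg1 (hAut α)) hg0, W1, hW1k, ?_, ?_⟩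
            · show g1 (α.toEquiv (g0 v)) ∈ W1
              rw [LinearEquiv.coe_toEquiv, hαv]
              exact hyW1
            · intro s hs
              show g1 (α.toEquiv (g0 s)) ∈ W1
              have hsW0 : g0 s ∈ W0 := hg0S s hs
              rw [LinearEquiv.coe_toEquiv, hαU (g0 s) hsW0]
              exact hTW1 (g0 s) ⟨s, hs, rfl⟩
        refine ⟨hA, fun hI => himg_ne_univ hI hAuniv, hAuniv⟩
    · -- finrank M < k : case 3
      right; right
      have hlt : Module.finrank (ZMod p) M < k := lt_of_le_of_ne hMk hdk
      have hAuniv : Ak p V G k S = Set.univ := by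
        ext v
        simp only [Set.mem_univ, iff_true]
        rw [mem_Ak_iff]
        set M' : Submodule (ZMod p) V := M ⊔ Submodule.span (ZMod p) {g0 v} with hM'
        haveI : FiniteDimensional (ZMod p) M' := Submodule.finiteDimensional_sup _ _
        have hsing : Module.finrank (ZMod p) (Submodule.span (ZMod p) {g0 v}) ≤ 1 := by
          by_cases h0 : g0 v = 0
          · rw [h0, Submodule.span_zero_singleton]
            simp
          · rw [finrank_span_singleton h0]
        have hM'k : Module.finrank (ZMod p) M' ≤ k := by
          have := Submodule.finrank_add_le_finrank_add_finrank M
            (Submodule.span (ZMod p) {g0 v})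
          rw [← hM'] at this
          omega
        obtain ⟨W, hMW', hWk⟩ := aux_extend k (k - Module.finrank (ZMod p) M') M' (by omega)
        refine ⟨g0, hg0, W, hWk, ?_, ?_⟩
        · exact hMW' (Submodule.mem_sup_right (Submodule.mem_span_singleton_self _))
        · intro s hs
          exact hMW' (Submodule.mem_sup_left (Submodule.subset_span ⟨s, hs, rfl⟩))
      refine ⟨hA, fun hI => himg_ne_univ hI hAuniv, hAuniv⟩
end

section
/- Let S ⊆ V be a linearly independent set and k ≥ 1, and suppose A_k(S) is nontrivial, i.e., A_k(S) ≠ ∅ and A_k(S) ≠ V. Then for every nonzero v ∈ A_k(S) and every unit λ ∈ (ZMod p)ˣ: λ • v ∈ A_k(S) if and only if λ ∈ Γ. -/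
theorem Equiv.Perm.inv_apply_self {α : Type*} (f : Equiv.Perm α) (x : α) : f⁻¹ (f x) = x :=
  f.symm_apply_apply x

theorem Equiv.Perm.apply_inv_self {α : Type*} (f : Equiv.Perm α) (x : α) : f (f⁻¹ x) = x :=
  f.apply_symm_apply x

section Stmt8Aux

variable {p : ℕ} [Fact p.Prime] {V : Type*} [AddCommGroup V] [Module (ZMod p) V]

private lemma stmt8_zmod_finite : Finite (ZMod p) := by
  haveI : NeZero p := ⟨(Fact.out : p.Prime).ne_zero⟩
  infer_instance

/-- The carrier of the span of a finite set is finite. -/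
private lemma stmt8_span_finite {s : Set V} (hs : s.Finite) :
    ((Submodule.span (ZMod p) s : Submodule (ZMod p) V) : Set V).Finite := by
  haveI := stmt8_zmod_finite (p := p)
  exact hs.submoduleSpan (ZMod p)

private lemma stmt8_exists_avoid [Infinite V] (s : Set V) (hs : s.Finite) :
    ∃ x : V, x ∉ s := by
  obtain ⟨x, hx⟩ := hs.infinite_compl.nonempty
  exact ⟨x, hx⟩

/-- A linear automorphism fixing a set pointwise fixes its span pointwise. -/
private lemma stmt8_fixes_span {φ : V ≃ₗ[ZMod p] V} {s : Set V}
    (h : ∀ x ∈ s, φ x = x) :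
    ∀ y ∈ Submodule.span (ZMod p) s, φ y = y := by
  intro y hy
  induction hy using Submodule.span_induction with
  | mem x hx => exact h x hx
  | zero => exact map_zero φ
  | add x y _ _ hx hy => rw [map_add, hx, hy]
  | smul a x _ hx => rw [map_smul, hx]

/-- Any two finite linearly independent families (of the same index type) are
related by a linear automorphism of `V`. -/
private lemma stmt8_autext [Countable V] [Infinite V] {ι : Type} [Fintype ι]
    {c d : ι → V} (hc : LinearIndependent (ZMod p) c) (hd : LinearIndependent (ZMod p) d) :
    ∃ φ : V ≃ₗ[ZMod p] V, ∀ i, φ (c i) = d i := by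
  classical
  haveI := stmt8_zmod_finite (p := p)
  have hinf : ∀ {e : ι → V} (he : LinearIndependent (ZMod p) e),
      Infinite (Module.Basis.sumExtendIndex he) := by
    intro e he
    by_contra hfin
    rw [not_infinite_iff_finite] at hfin
    haveI := hfin
    haveI : Module.Finite (ZMod p) V := Module.Finite.of_basis (Module.Basis.sumExtend he)
    haveI : Finite V := Module.finite_of_finite (ZMod p)
    exact not_finite V
  haveI := hinf hc
  haveI := hinf hd
  obtain ⟨eD⟩ : Nonempty (Module.Basis.sumExtendIndex hc ≃ Module.Basis.sumExtendIndex hd) :=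
    nonempty_equiv_of_countable
  set e : (ι ⊕ Module.Basis.sumExtendIndex hc) ≃ (ι ⊕ Module.Basis.sumExtendIndex hd) :=
    Equiv.sumCongr (Equiv.refl ι) eD with he
  have key : ∀ {f : ι → V} (hf : LinearIndependent (ZMod p) f) (j : ι),
      (Module.Basis.sumExtend hf) (Sum.inl j) = f j := by
    intro f hf j
    unfold Module.Basis.sumExtend
    rw [Module.Basis.reindex_apply]
    simp only [Trans.trans, Equiv.trans_apply, Module.Basis.extend_apply_self]
    rfl
  refine ⟨((Module.Basis.sumExtend hc)).equiv ((Module.Basis.sumExtend hd)) e, fun i => ?_⟩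
  have h1 : (Module.Basis.sumExtend hc) (Sum.inl i) = c i := key hc i
  have h2 : (Module.Basis.sumExtend hd) (Sum.inl i) = d i := key hd i
  calc (((Module.Basis.sumExtend hc)).equiv ((Module.Basis.sumExtend hd)) e) (c i)
      = (((Module.Basis.sumExtend hc)).equiv ((Module.Basis.sumExtend hd)) e) ((Module.Basis.sumExtend hc) (Sum.inl i)) := by rw [h1]
    _ = (Module.Basis.sumExtend hd) (e (Sum.inl i)) := Module.Basis.equiv_apply _ _ _ _
    _ = (Module.Basis.sumExtend hd) (Sum.inl i) := by rw [he]; simp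
    _ = d i := h2

/-- There is a linear automorphism fixing `span T` pointwise and sending `x` to `τ`,
provided `x, τ ∉ span T` and `T` is finite. -/
private lemma stmt8_fix_move [Countable V] [Infinite V] {T : Set V} (hT : T.Finite)
    {x τ : V} (hx : x ∉ Submodule.span (ZMod p) T) (hτ : τ ∉ Submodule.span (ZMod p) T) :
    ∃ φ : V ≃ₗ[ZMod p] V, (∀ y ∈ Submodule.span (ZMod p) T, φ y = y) ∧ φ x = τ := by
  classical
  set U : Submodule (ZMod p) V := Submodule.span (ZMod p) T with hU
  haveI : FiniteDimensional (ZMod p) U := FiniteDimensional.span_of_finite _ hT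
  set r : ℕ := Module.finrank (ZMod p) U with hr
  obtain ⟨B⟩ : Nonempty (Module.Basis (Fin r) (ZMod p) U) := ⟨Module.finBasis (ZMod p) U⟩
  set u : Fin r → V := fun i => (B i : V) with hu
  have huli : LinearIndependent (ZMod p) u :=
    B.linearIndependent.map' U.subtype (Submodule.ker_subtype U)
  have huspan : Submodule.span (ZMod p) (Set.range u) = U := by
    have : Set.range u = (U.subtype) '' (Set.range B) := by
      rw [← Set.range_comp]; rfl
    rw [this, ← Submodule.map_span, B.span_eq, Submodule.map_top, Submodule.range_subtype]
  have hxli : LinearIndependent (ZMod p) (Fin.cons x u : Fin (r+1) → V) := by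
    rw [linearIndependent_fin_cons]
    exact ⟨huli, by rwa [huspan]⟩
  have hτli : LinearIndependent (ZMod p) (Fin.cons τ u : Fin (r+1) → V) := by
    rw [linearIndependent_fin_cons]
    exact ⟨huli, by rwa [huspan]⟩
  obtain ⟨φ, hφ⟩ := stmt8_autext hxli hτli
  refine ⟨φ, ?_, ?_⟩
  · have hfix : ∀ y ∈ Set.range u, φ y = y := by
      rintro y ⟨i, rfl⟩
      have := hφ i.succ
      simpa [Fin.cons_succ] using this
    intro y hy
    exact stmt8_fixes_span hfix y (by rwa [huspan])
  · have := hφ 0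
    simpa [Fin.cons_zero] using this

/-- Generic choice of an `m`-tuple whose images under `g` are independent over `U`
and which is independent together with `v`. -/
private lemma stmt8_exists_fam [Infinite V] (g : Equiv.Perm V) (U : Submodule (ZMod p) V)
    (hUfin : (U : Set V).Finite) (v : V) (hv : v ≠ 0) (m : ℕ) :
    ∃ c : Fin m → V,
      LinearIndependent (ZMod p) (fun i => U.mkQ (g (c i))) ∧
      LinearIndependent (ZMod p) (Fin.cons v c : Fin (m+1) → V) := by
  classical
  induction m with
  | zero =>
      refine ⟨fun i => i.elim0, linearIndependent_empty_type, ?_⟩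
      rw [linearIndependent_fin_cons]
      refine ⟨linearIndependent_empty_type, ?_⟩
      have hrange : Set.range (fun i : Fin 0 => i.elim0 (α := V)) = (∅ : Set V) := by
        simp
      rw [hrange, Submodule.span_empty, Submodule.mem_bot]
      exact hv
  | succ m ih =>
      obtain ⟨c, hq, hli⟩ := ih
      set Z₁ : Submodule (ZMod p) V :=
        Submodule.span (ZMod p) ((U : Set V) ∪ Set.range (fun i => g (c i))) with hZ₁
      set Z₂ : Submodule (ZMod p) V :=
        Submodule.span (ZMod p) ({v} ∪ Set.range c) with hZ₂
      have hZ₁fin : (Z₁ : Set V).Finite :=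
        stmt8_span_finite (hUfin.union (Set.finite_range _))
      have hZ₂fin : (Z₂ : Set V).Finite :=
        stmt8_span_finite (((Set.finite_singleton v).union (Set.finite_range c)))
      have hbadfin : ((⇑g ⁻¹' (Z₁ : Set V)) ∪ (Z₂ : Set V)).Finite :=
        (hZ₁fin.preimage (g.injective.injOn)).union hZ₂fin
      obtain ⟨x, hx⟩ := stmt8_exists_avoid _ hbadfin
      have hx₁ : g x ∉ Z₁ := fun h => hx (Set.mem_union_left _ h)
      have hx₂ : x ∉ Z₂ := fun h => hx (Set.mem_union_right _ h)
      refine ⟨Fin.cons x c, ?_, ?_⟩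
      · have hfuneq : (fun i : Fin (m+1) => U.mkQ (g ((Fin.cons x c : Fin (m+1) → V) i)))
            = Fin.cons (U.mkQ (g x)) (fun i => U.mkQ (g (c i))) := by
          funext i
          refine Fin.cases ?_ ?_ i <;> simp
        rw [hfuneq, linearIndependent_fin_cons]
        refine ⟨hq, ?_⟩
        intro hmem
        apply hx₁
        have hrange : Set.range (fun i => U.mkQ (g (c i)))
            = U.mkQ '' (Set.range (fun i => g (c i))) := by
          rw [← Set.range_comp]; rfl
        rw [hrange, ← Submodule.map_span] at hmem
        obtain ⟨z, hz, hzeq⟩ := Submodule.mem_map.mp hmem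
        have hker : g x - z ∈ U := by
          have : U.mkQ (g x - z) = 0 := by
            rw [map_sub, hzeq, sub_self]
          rwa [← Submodule.ker_mkQ U, LinearMap.mem_ker]
        have : g x = (g x - z) + z := by abel
        rw [this, hZ₁, Submodule.span_union]
        exact Submodule.add_mem _
          (Submodule.mem_sup_left (by rwa [Submodule.span_eq]))
          (Submodule.mem_sup_right hz)
      · have hrearr : (Fin.cons v (Fin.cons x c) : Fin (m+2) → V)
            = (Fin.cons v (Fin.cons x c) : Fin (m+2) → V) := rfl
        rw [linearIndependent_fin_cons]
        constructor
        · rw [linearIndependent_fin_cons]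
          refine ⟨(linearIndependent_fin_cons.mp hli).1, ?_⟩
          intro hmem
          apply hx₂
          rw [hZ₂, Submodule.span_union]
          exact Submodule.mem_sup_right hmem
        · -- v ∉ span (range (Fin.cons x c)) = span (insert x (range c))
          rw [Fin.range_cons]
          intro hmem
          rw [Submodule.mem_span_insert] at hmem
          obtain ⟨a, z, hz, hveq⟩ := hmem
          by_cases ha : a = 0
          · rw [ha, zero_smul, zero_add] at hveq
            exact (linearIndependent_fin_cons.mp hli).2 (hveq ▸ hz)
          · apply hx₂
            have hxv : x = a⁻¹ • (v - z) := by
              rw [hveq]; rw [add_sub_cancel_right, smul_smul, inv_mul_cancel₀ ha, one_smul]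
            rw [hxv, hZ₂]
            refine Submodule.smul_mem _ _ (Submodule.sub_mem _ ?_ ?_)
            · exact Submodule.subset_span (Set.mem_union_left _ rfl)
            · exact Submodule.span_mono Set.subset_union_right hz
/-- `Ak` is invariant under elements of `G` fixing `S` pointwise. -/
private lemma stmt8_move_mem (G : Subgroup (Equiv.Perm V)) (k : ℕ) (S : Set V)
    {z : V} (hz : z ∈ Ak p V G k S) {h : Equiv.Perm V} (hhG : h ∈ G)
    (hfix : ∀ s ∈ S, h s = s) : h z ∈ Ak p V G k S := by
  obtain ⟨g, hgG, W, hWk, hgz, hgS⟩ := hz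
  refine ⟨g * h⁻¹, mul_mem hgG (inv_mem hhG), W, hWk, ?_, ?_⟩
  · rw [Equiv.Perm.mul_apply, Equiv.Perm.inv_apply_self]
    exact hgz
  · intro s hs
    rw [Equiv.Perm.mul_apply]
    have hinv : h⁻¹ s = s := by
      conv_lhs => rw [← hfix s hs]
      exact Equiv.Perm.inv_apply_self h s
    rw [hinv]
    exact hgS s hs

/-- If some element of `G` moves `z` out of the span of the image of `S`, then some
element of `G` fixing `S` pointwise moves `z` out of the span of `S`. -/
private lemma stmt8_escape [Countable V] [Infinite V] (G : Subgroup (Equiv.Perm V))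
    (hAut : ∀ φ : V ≃ₗ[ZMod p] V, (φ.toEquiv : Equiv.Perm V) ∈ G)
    {S : Set V} (hSfin : S.Finite) {z : V}
    {h₀ : Equiv.Perm V} (hh₀G : h₀ ∈ G)
    (hh₀z : h₀ z ∉ Submodule.span (ZMod p) (⇑h₀ '' S)) :
    ∃ h : Equiv.Perm V, h ∈ G ∧ (∀ s ∈ S, h s = s) ∧
      h z ∉ Submodule.span (ZMod p) S := by
  classical
  have hfin : ((Submodule.span (ZMod p) (⇑h₀ '' S) : Set V)
      ∪ (⇑h₀ '' (Submodule.span (ZMod p) S : Set V))).Finite :=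
    (stmt8_span_finite (hSfin.image _)).union ((stmt8_span_finite hSfin).image _)
  obtain ⟨τ, hτ⟩ := stmt8_exists_avoid _ hfin
  have hτ₁ : τ ∉ Submodule.span (ZMod p) (⇑h₀ '' S) := fun hh => hτ (Set.mem_union_left _ hh)
  have hτ₂ : τ ∉ ⇑h₀ '' (Submodule.span (ZMod p) S : Set V) :=
    fun hh => hτ (Set.mem_union_right _ hh)
  obtain ⟨φ, hφfix, hφx⟩ := stmt8_fix_move (hSfin.image ⇑h₀) hh₀z hτ₁
  refine ⟨h₀⁻¹ * (φ.toEquiv : Equiv.Perm V) * h₀, ?_, ?_, ?_⟩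
  · exact mul_mem (mul_mem (inv_mem hh₀G) (hAut φ)) hh₀G
  · intro s hs
    rw [Equiv.Perm.mul_apply, Equiv.Perm.mul_apply]
    have h1 : (φ.toEquiv : Equiv.Perm V) (h₀ s) = h₀ s := by
      have : φ (h₀ s) = h₀ s := hφfix _ (Submodule.subset_span ⟨s, hs, rfl⟩)
      simpa using this
    rw [h1, Equiv.Perm.inv_apply_self]
  · rw [Equiv.Perm.mul_apply, Equiv.Perm.mul_apply]
    intro hmem
    apply hτ₂
    have h2 : (φ.toEquiv : Equiv.Perm V) (h₀ z) = τ := by simpa using hφx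
    rw [h2] at hmem
    exact ⟨h₀⁻¹ τ, hmem, Equiv.Perm.apply_inv_self h₀ τ⟩

/-- If `Ak` is not everything, every element of `Ak` is "captive": every element of `G`
maps it into the span of the image of `S`. -/
private lemma stmt8_mem_cl [Countable V] [Infinite V] (G : Subgroup (Equiv.Perm V))
    (hAut : ∀ φ : V ≃ₗ[ZMod p] V, (φ.toEquiv : Equiv.Perm V) ∈ G)
    (k : ℕ) {S : Set V} (hSfin : S.Finite)
    (hnuniv : Ak p V G k S ≠ Set.univ)
    {u : V} (hu : u ∈ Ak p V G k S) :
    ∀ h : Equiv.Perm V, h ∈ G → h u ∈ Submodule.span (ZMod p) (⇑h '' S) := by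
  by_contra hcon
  push_neg at hcon
  obtain ⟨h₀, hh₀G, hh₀u⟩ := hcon
  obtain ⟨hp, hpG, hpfix, hpu⟩ := stmt8_escape G hAut hSfin hh₀G hh₀u
  have haA : hp u ∈ Ak p V G k S := stmt8_move_mem G k S hu hpG hpfix
  apply hnuniv
  rw [Set.eq_univ_iff_forall]
  intro x
  by_cases hxcl : ∀ h : Equiv.Perm V, h ∈ G → h x ∈ Submodule.span (ZMod p) (⇑h '' S)
  · obtain ⟨g, hgG, W, hWk, hgu, hgS⟩ := hu
    refine ⟨g, hgG, W, hWk, ?_, hgS⟩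
    have hle : Submodule.span (ZMod p) (⇑g '' S) ≤ W := by
      rw [Submodule.span_le]
      rintro y ⟨s, hs, rfl⟩
      exact hgS s hs
    exact hle (hxcl g hgG)
  · push_neg at hxcl
    obtain ⟨h₁, hh₁G, hh₁x⟩ := hxcl
    obtain ⟨hq, hqG, hqfix, hqx⟩ := stmt8_escape G hAut hSfin hh₁G hh₁x
    obtain ⟨φ, hφfix, hφx⟩ := stmt8_fix_move hSfin hqx hpu
    set ψ : Equiv.Perm V := hq⁻¹ * ((φ.toEquiv : Equiv.Perm V))⁻¹ with hψ
    have hψG : ψ ∈ G := mul_mem (inv_mem hqG) (inv_mem (hAut φ))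
    have hψfix : ∀ s ∈ S, ψ s = s := by
      intro s hs
      rw [hψ, Equiv.Perm.mul_apply]
      have h2 : ((φ.toEquiv : Equiv.Perm V))⁻¹ s = s := by
        have h3 : (φ.toEquiv : Equiv.Perm V) s = s := by
          simpa using hφfix s (Submodule.subset_span hs)
        conv_lhs => rw [← h3]
        exact Equiv.Perm.inv_apply_self _ _
      rw [h2]
      have h4 : hq s = s := hqfix s hs
      conv_lhs => rw [← h4]
      exact Equiv.Perm.inv_apply_self _ _
    have hxa : ψ (hp u) = x := by
      rw [hψ, Equiv.Perm.mul_apply]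
      have h3 : ((φ.toEquiv : Equiv.Perm V))⁻¹ (hp u) = hq x := by
        have h5 : (φ.toEquiv : Equiv.Perm V) (hq x) = hp u := by simpa using hφx
        rw [← h5, Equiv.Perm.inv_apply_self]
      rw [h3, Equiv.Perm.inv_apply_self]
    have hfin := stmt8_move_mem G k S haA hψG hψfix
    rwa [hxa] at hfin

/-- Main lemma: if both `v` and `lam • v` are captive, then every `g ∈ G` maps
`lam • v` into the line spanned by `g v`. -/
private lemma stmt8_main [Countable V] [Infinite V] (G : Subgroup (Equiv.Perm V))
    (hAut : ∀ φ : V ≃ₗ[ZMod p] V, (φ.toEquiv : Equiv.Perm V) ∈ G)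
    (hzero : ∀ g ∈ G, g 0 = (0 : V))
    {S : Set V} (hS : LinearIndependent (ZMod p) ((↑) : S → V)) (hSfin : S.Finite)
    {v : V} (hv : v ≠ 0) (lam : ZMod p) (hlv : lam • v ≠ 0)
    (hvcl : ∀ h : Equiv.Perm V, h ∈ G → h v ∈ Submodule.span (ZMod p) (⇑h '' S))
    (hlcl : ∀ h : Equiv.Perm V, h ∈ G → h (lam • v) ∈ Submodule.span (ZMod p) (⇑h '' S))
    {g : Equiv.Perm V} (hg : g ∈ G) :
    g (lam • v) ∈ Submodule.span (ZMod p) {g v} := by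
  classical
  by_contra hnot
  have hgv0 : g v ≠ 0 := fun h0 => hv (g.injective (h0.trans (hzero g hg).symm))
  have hgl0 : g (lam • v) ≠ 0 := fun h0 => hlv (g.injective (h0.trans (hzero g hg).symm))
  have hxny : g v ∉ Submodule.span (ZMod p) {g (lam • v)} := by
    intro hmem
    obtain ⟨a, ha⟩ := Submodule.mem_span_singleton.mp hmem
    have ha0 : a ≠ 0 := fun h0 => hgv0 (by rw [← ha, h0, zero_smul])
    apply hnot
    rw [Submodule.mem_span_singleton]
    exact ⟨a⁻¹, by rw [← ha, smul_smul, inv_mul_cancel₀ ha0, one_smul]⟩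
  -- v lies in the span of S
  have hvS : v ∈ Submodule.span (ZMod p) S := by
    have h1 := hvcl 1 (one_mem G)
    simpa using h1
  -- coefficients
  set t : Finset V := hSfin.toFinset with hts
  have ht : (t : Set V) = S := hSfin.coe_toFinset
  have hvS' : v ∈ Submodule.span (ZMod p) (t : Set V) := by rwa [ht]
  obtain ⟨f, -, hf⟩ := Submodule.mem_span_finset.mp hvS'
  have htne : t.Nonempty := by
    rcases Finset.eq_empty_or_nonempty t with h | h
    · rw [h, Finset.sum_empty] at hf
      exact absurd hf.symm hv
    · exact h
  obtain ⟨m, hm⟩ : ∃ m, t.card = m + 1 :=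
    ⟨t.card - 1, by have := Finset.card_pos.mpr htne; omega⟩
  set e0 : Fin (m+1) ≃ {x // x ∈ t} := (finCongr hm.symm).trans t.equivFin.symm with he0
  set w : Fin (m+1) → V := fun i => ((e0 i : V)) with hw
  set a : Fin (m+1) → ZMod p := fun i => f (w i) with hafun
  have hsum : ∑ i, a i • w i = v := by
    have h2 : ∑ i, a i • w i = ∑ x : {x // x ∈ t}, f (x : V) • (x : V) :=
      Equiv.sum_comp e0 (fun x => f (x : V) • (x : V))
    rw [h2, Finset.univ_eq_attach, Finset.sum_attach t (fun i => f i • i), hf]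
  obtain ⟨i₀, -, hai₀⟩ := Finset.exists_ne_zero_of_sum_ne_zero
    (show ∑ i, a i • w i ≠ 0 by rw [hsum]; exact hv)
  have hai₀' : a i₀ ≠ 0 := fun h0 => hai₀ (by rw [h0, zero_smul])
  set sw : Equiv.Perm (Fin (m+1)) := Equiv.swap 0 i₀ with hswdef
  set w' : Fin (m+1) → V := w ∘ sw with hw'
  set a' : Fin (m+1) → ZMod p := a ∘ sw with ha'
  have ha'0 : a' 0 ≠ 0 := by
    simpa [ha', hswdef, Equiv.swap_apply_left] using hai₀'
  have hsum' : ∑ i, a' i • w' i = v := by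
    rw [← hsum]
    exact Equiv.sum_comp sw (fun j => a j • w j)
  -- linear independence and range of w'
  have hwmem : ∀ i, w' i ∈ S := by
    intro i
    have : ((e0 (sw i) : V)) ∈ t := (e0 (sw i)).2
    rw [← ht]
    exact_mod_cast this
  set ws : Fin (m+1) → S := fun i => ⟨w' i, hwmem i⟩ with hws
  have hwsinj : Function.Injective ws := by
    intro i j hij
    have h3 : (ws i : V) = (ws j : V) := congrArg Subtype.val hij
    have h4 : (e0 (sw i) : V) = (e0 (sw j) : V) := h3
    have h5 : e0 (sw i) = e0 (sw j) := Subtype.ext h4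
    exact sw.injective (e0.injective h5)
  have hw'li : LinearIndependent (ZMod p) w' := by
    have h5 : w' = ((↑) : S → V) ∘ ws := rfl
    rw [h5]
    exact hS.comp ws hwsinj
  have hrange : Set.range w' = S := by
    apply Set.eq_of_subset_of_subset
    · rintro y ⟨i, rfl⟩
      exact hwmem i
    · intro y hy
      obtain ⟨x, hx⟩ : ∃ x : {x // x ∈ t}, (x : V) = y := ⟨⟨y, by rwa [← ht] at hy⟩, rfl⟩
      refine ⟨sw.symm (e0.symm x), ?_⟩
      calc w' (sw.symm (e0.symm x)) = w (sw (sw.symm (e0.symm x))) := rfl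
        _ = w (e0.symm x) := by rw [Equiv.apply_symm_apply]
        _ = ((e0 (e0.symm x) : V)) := rfl
        _ = (x : V) := by rw [Equiv.apply_symm_apply]
        _ = y := hx
  -- generic family
  set U₂ : Submodule (ZMod p) V := Submodule.span (ZMod p) (⇑g '' S) with hU₂
  have hU₂fin : (U₂ : Set V).Finite := stmt8_span_finite (hSfin.image _)
  obtain ⟨c, hq, hli⟩ := stmt8_exists_fam g U₂ hU₂fin v hv m
  -- the twisted family b
  set X : V := ∑ i : Fin m, a' i.succ • c i with hX
  set b : Fin (m+1) → V := Fin.cons ((a' 0)⁻¹ • (v - X)) c with hb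
  have hbsum : ∑ i, a' i • b i = v := by
    rw [Fin.sum_univ_succ]
    simp only [hb, Fin.cons_zero, Fin.cons_succ]
    rw [smul_smul, mul_inv_cancel₀ ha'0, one_smul, ← hX, sub_add_cancel]
  have hbli : LinearIndependent (ZMod p) b := by
    rw [Fintype.linearIndependent_iff]
    intro β hβ
    set γ : Fin (m+1) → ZMod p :=
      Fin.cons (β 0 * (a' 0)⁻¹) (fun i => β i.succ - β 0 * (a' 0)⁻¹ * a' i.succ) with hγ
    have hγsum : ∑ j, γ j • (Fin.cons v c : Fin (m+1) → V) j = 0 := by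
      rw [← hβ]
      rw [Fin.sum_univ_succ, Fin.sum_univ_succ]
      simp only [hγ, hb, hX, Fin.cons_zero, Fin.cons_succ, sub_smul, smul_sub, smul_smul,
        Finset.sum_sub_distrib, Finset.smul_sum, mul_assoc]
      abel
    have hγ0 := Fintype.linearIndependent_iff.mp hli γ hγsum
    have hβ0 : β 0 = 0 := by
      have h6 : γ 0 = 0 := hγ0 0
      rw [hγ, Fin.cons_zero] at h6
      rcases mul_eq_zero.mp h6 with h | h
      · exact h
      · exact absurd h (inv_ne_zero ha'0)
    intro j
    refine Fin.cases ?_ (fun j' => ?_) j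
    · exact hβ0
    · have h7 : γ j'.succ = 0 := hγ0 j'.succ
      rw [hγ, Fin.cons_succ] at h7
      rw [hβ0] at h7
      simpa using h7
  -- the automorphism
  obtain ⟨φ, hφ⟩ := stmt8_autext hw'li hbli
  have hφv : φ v = v := by
    conv_lhs => rw [← hsum']
    rw [map_sum]
    simp_rw [map_smul, hφ]
    exact hbsum
  set ψ : Equiv.Perm V := (φ.toEquiv : Equiv.Perm V) with hψ
  have hψapp : ∀ x : V, ψ x = φ x := fun x => rfl
  have hgψ : g * ψ ∈ G := mul_mem hg (hAut φ)
  set W₃ : Submodule (ZMod p) V :=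
    Submodule.span (ZMod p) (Set.range (fun i => g (b i))) with hW₃
  have himg : ⇑(g * ψ) '' S = Set.range (fun i => g (b i)) := by
    have h6 : ⇑(g * ψ) '' S = ⇑g '' (⇑ψ '' S) := by
      rw [Equiv.Perm.coe_mul, Set.image_comp]
    have h7 : ⇑ψ '' S = Set.range b := by
      rw [← hrange, ← Set.range_comp]
      have h8 : ⇑ψ ∘ w' = b := by
        funext i
        rw [Function.comp_apply, hψapp, hφ]
      rw [h8]
    rw [h6, h7, ← Set.range_comp]
    rfl
  have hgvW₃ : g v ∈ W₃ := by
    have h9 := hvcl (g * ψ) hgψ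
    rw [himg] at h9
    have h10 : (g * ψ) v = g v := by
      rw [Equiv.Perm.mul_apply, hψapp, hφv]
    rwa [h10] at h9
  have hglW₃ : g (lam • v) ∈ W₃ := by
    have h9 := hlcl (g * ψ) hgψ
    rw [himg] at h9
    have h10 : (g * ψ) (lam • v) = g (lam • v) := by
      rw [Equiv.Perm.mul_apply, hψapp, map_smul, hφv]
    rwa [h10] at h9
  have hgvU₂ : g v ∈ U₂ := hvcl g hg
  have hglU₂ : g (lam • v) ∈ U₂ := hlcl g hg
  -- coefficient killing
  have hgcli : LinearIndependent (ZMod p) (fun i => g (c i)) :=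
    LinearIndependent.of_comp U₂.mkQ hq
  have hcoef : ∀ y : V, y ∈ U₂ →
      y ∈ Submodule.span (ZMod p) (Set.range (fun i => g (c i))) → y = 0 := by
    intro y hyU hyspan
    rw [Submodule.mem_span_range_iff_exists_fun] at hyspan
    obtain ⟨γ, hγ⟩ := hyspan
    have h8 : ∑ i, γ i • U₂.mkQ (g (c i)) = 0 := by
      have h9 := congrArg U₂.mkQ hγ
      rw [map_sum] at h9
      simp_rw [map_smul] at h9
      rw [h9]
      exact (Submodule.Quotient.mk_eq_zero U₂).mpr hyU
    have h10 := Fintype.linearIndependent_iff.mp hq γ h8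
    rw [← hγ]
    apply Finset.sum_eq_zero
    intro i _
    rw [h10 i, zero_smul]
  -- the big independent family
  set F : Fin (m+2) → V :=
    Fin.cons (g v) (Fin.cons (g (lam • v)) (fun i => g (c i))) with hF
  have hLF : LinearIndependent (ZMod p) F := by
    rw [hF, linearIndependent_fin_cons]
    constructor
    · rw [linearIndependent_fin_cons]
      refine ⟨hgcli, fun hmem => hgl0 (hcoef _ hglU₂ hmem)⟩
    · rw [Fin.range_cons]
      intro hmem
      rw [Submodule.mem_span_insert] at hmem
      obtain ⟨β, z, hz, heq⟩ := hmem
      have hzU : z ∈ U₂ := by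
        have h11 : z = g v - β • g (lam • v) := by rw [heq]; abel
        rw [h11]
        exact Submodule.sub_mem _ hgvU₂ (Submodule.smul_mem _ _ hglU₂)
      have hz0 : z = 0 := hcoef z hzU hz
      rw [hz0, add_zero] at heq
      apply hxny
      rw [Submodule.mem_span_singleton]
      exact ⟨β, heq.symm⟩
  haveI : FiniteDimensional (ZMod p) W₃ :=
    FiniteDimensional.span_of_finite _ (Set.finite_range _)
  have hFW : ∀ j, F j ∈ W₃ := by
    intro j
    refine Fin.cases ?_ (fun j' => ?_) j
    · simpa [hF, Fin.cons_zero] using hgvW₃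
    · refine Fin.cases ?_ (fun j'' => ?_) j'
      · simpa [hF, Fin.cons_succ, Fin.cons_zero] using hglW₃
      · have h12 : F j''.succ.succ = g (c j'') := by
          rw [hF, Fin.cons_succ, Fin.cons_succ]
        rw [h12]
        have h13 : g (c j'') = g (b j''.succ) := by rw [hb, Fin.cons_succ]
        rw [h13]
        exact Submodule.subset_span ⟨j''.succ, rfl⟩
  set F' : Fin (m+2) → W₃ := fun j => ⟨F j, hFW j⟩ with hF'
  have hLF' : LinearIndependent (ZMod p) F' := by
    apply LinearIndependent.of_comp W₃.subtype
    have h14 : W₃.subtype ∘ F' = F := rfl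
    rwa [h14]
  have h15 := hLF'.fintype_card_le_finrank
  have h16 : Module.finrank (ZMod p) W₃ ≤ m + 1 := by
    have h17 := finrank_range_le_card (R := ZMod p) (fun i : Fin (m+1) => g (b i))
    rw [Set.finrank] at h17
    simpa [hW₃] using h17
  rw [Fintype.card_fin] at h15
  omega

end Stmt8Aux

/-- If `S` is linearly independent and `A_k(S)` is nontrivial, then for every
nonzero `v ∈ A_k(S)` and every unit `λ`: `λ • v ∈ A_k(S)` iff `λ ∈ Γ`. -/
theorem stmt_8 (p : ℕ) [Fact p.Prime] (hp : p ≠ 2)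
    (V : Type*) [AddCommGroup V] [Module (ZMod p) V] [Countable V] [Infinite V]
    (G : Subgroup (Equiv.Perm V))
    (hclosed : ∀ f : Equiv.Perm V, (∀ F : Finset V, ∃ g ∈ G, ∀ x ∈ F, g x = f x) → f ∈ G)
    (hAut : ∀ φ : V ≃ₗ[ZMod p] V, (φ.toEquiv : Equiv.Perm V) ∈ G)
    (hzero : ∀ g ∈ G, g 0 = (0 : V))
    (Γ : Subgroup (ZMod p)ˣ)
    (hΓ : ∀ v w : V,
      (∀ g ∈ G, Submodule.span (ZMod p) {g v} = Submodule.span (ZMod p) {g w}) ↔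
      (∃ γ ∈ Γ, v = (γ : ZMod p) • w))
    (S : Set V) (hS : LinearIndependent (ZMod p) ((↑) : S → V))
    (k : ℕ) (hk : 1 ≤ k)
    (hne : Ak p V G k S ≠ ∅) (hnuniv : Ak p V G k S ≠ Set.univ)
    (v : V) (hv : v ≠ 0) (hvA : v ∈ Ak p V G k S) (lam : (ZMod p)ˣ) :
    (lam : ZMod p) • v ∈ Ak p V G k S ↔ lam ∈ Γ := by
  constructor
  · -- hard direction
    intro hlvA
    obtain ⟨g₁, hg₁G, W₁, hW₁k, hg₁v, hg₁S⟩ := hvA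
    have hrank : Module.rank (ZMod p) W₁ < Cardinal.aleph0 := by
      by_contra hlt
      push_neg at hlt
      rw [Module.finrank, Cardinal.toNat_apply_of_aleph0_le hlt] at hW₁k
      omega
    haveI : Module.Finite (ZMod p) W₁ := Module.rank_lt_aleph0_iff.mp hrank
    haveI := stmt8_zmod_finite (p := p)
    haveI : Finite W₁ := Module.finite_of_finite (ZMod p)
    have hWfinset : ((W₁ : Set V)).Finite := Set.toFinite _
    have hSfin : S.Finite := by
      have hsub : S ⊆ ⇑g₁ ⁻¹' (W₁ : Set V) := fun s hs => hg₁S s hs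
      exact ((hWfinset.preimage (g₁.injective.injOn)).subset hsub)
    have hvA' : v ∈ Ak p V G k S := ⟨g₁, hg₁G, W₁, hW₁k, hg₁v, hg₁S⟩
    have hvcl := stmt8_mem_cl G hAut k hSfin hnuniv hvA'
    have hlcl := stmt8_mem_cl G hAut k hSfin hnuniv hlvA
    have hlv0 : (lam : ZMod p) • v ≠ 0 := by
      intro h0
      apply hv
      have h1 : ((lam⁻¹ : (ZMod p)ˣ) : ZMod p) • ((lam : ZMod p) • v) = 0 := by
        rw [h0, smul_zero]
      rwa [smul_smul, ← Units.val_mul, inv_mul_cancel, Units.val_one, one_smul] at h1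
    have hspan : ∀ g ∈ G, Submodule.span (ZMod p) {g ((lam : ZMod p) • v)}
        = Submodule.span (ZMod p) {g v} := by
      intro g hgG
      have hmem := stmt8_main G hAut hzero hS hSfin hv (lam : ZMod p) hlv0
        (fun h hh => hvcl h hh) (fun h hh => hlcl h hh) hgG
      obtain ⟨cc, hcc⟩ := Submodule.mem_span_singleton.mp hmem
      have hgl0 : g ((lam : ZMod p) • v) ≠ 0 := by
        intro h0
        exact hlv0 (g.injective (h0.trans (hzero g hgG).symm))
      have hcc0 : cc ≠ 0 := by
        intro h0
        rw [h0, zero_smul] at hcc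
        exact hgl0 hcc.symm
      rw [← hcc]
      exact Submodule.span_singleton_smul_eq (IsUnit.mk0 cc hcc0) _
    obtain ⟨γ, hγΓ, hγeq⟩ := (hΓ ((lam : ZMod p) • v) v).mp hspan
    have hlg : (lam : ZMod p) = (γ : ZMod p) := by
      by_contra hne'
      apply hv
      have h2 : ((lam : ZMod p) - (γ : ZMod p)) • v = 0 := by
        rw [sub_smul, hγeq, sub_self]
      have h3 : ((lam : ZMod p) - (γ : ZMod p)) ≠ 0 := sub_ne_zero.mpr hne'
      have h4 := congrArg (fun x => ((lam : ZMod p) - (γ : ZMod p))⁻¹ • x) h2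
      simpa [smul_smul, inv_mul_cancel₀ h3] using h4
    have hlamγ : lam = γ := Units.ext hlg
    rw [hlamγ]
    exact hγΓ
  · -- easy direction
    intro hlam
    have hspan := (hΓ ((lam : ZMod p) • v) v).mpr ⟨lam, hlam, rfl⟩
    obtain ⟨g, hgG, W, hWk, hgv, hgS⟩ := hvA
    refine ⟨g, hgG, W, hWk, ?_, hgS⟩
    have h1 : g ((lam : ZMod p) • v) ∈ Submodule.span (ZMod p) {g ((lam : ZMod p) • v)} :=
      Submodule.mem_span_singleton_self _
    rw [hspan g hgG] at h1
    exact (Submodule.span_singleton_le_iff_mem _ _).mpr hgv h1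
end

section
/- Let n, k ≥ 1. If there exist a linearly independent family t : Fin n → V, an element g ∈ G, and a submodule W of V with finrank (ZMod p) W = k such that g (t i) ∈ W for all i, then for every family s : Fin n → V there exist g' ∈ G and a submodule W' of V with finrank (ZMod p) W' = k such that g' (s i) ∈ W' for all i. -/
set_option maxHeartbeats 1000000

open Submodule Set Cardinal

section Aux

variable {p : ℕ} [Fact p.Prime] {V : Type*} [AddCommGroup V] [Module (ZMod p) V]

private lemma span_set_finite' {s : Set V} (hs : s.Finite) :
    ((span (ZMod p) s : Submodule (ZMod p) V) : Set V).Finite := by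
  haveI : FiniteDimensional (ZMod p) (span (ZMod p) s) :=
    FiniteDimensional.span_of_finite _ hs
  haveI : Finite (span (ZMod p) s) := Module.finite_of_finite (ZMod p)
  exact Set.toFinite _

private lemma exists_linear_aut' [Countable V] [Infinite V] {m : ℕ} (x y : Fin m → V)
    (hx : LinearIndependent (ZMod p) x) (hy : LinearIndependent (ZMod p) y) :
    ∃ φ : V ≃ₗ[ZMod p] V, ∀ i, φ (x i) = y i := by
  classical
  have hx' : LinearIndepOn (ZMod p) id (Set.range x) := (linearIndepOn_id_range_iff hx.injective).mpr hx
  have hy' : LinearIndepOn (ZMod p) id (Set.range y) := (linearIndepOn_id_range_iff hy.injective).mpr hy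
  set Sx : Set V := hx'.extend (Set.subset_univ _) with hSxdef
  set Sy : Set V := hy'.extend (Set.subset_univ _) with hSydef
  have hsubx : Set.range x ⊆ Sx := hx'.subset_extend _
  have hsuby : Set.range y ⊆ Sy := hy'.subset_extend _
  let bx : Module.Basis Sx (ZMod p) V := Module.Basis.extend hx'
  let by' : Module.Basis Sy (ZMod p) V := Module.Basis.extend hy'
  -- infinite bases
  have hinf : ∀ (S : Set V), Module.Basis S (ZMod p) V → S.Infinite := by
    intro S b hfin
    haveI : Fintype S := hfin.fintype
    haveI : Finite V := Finite.of_equiv _ b.equivFun.toEquiv.symm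
    exact not_finite V
  have hSxi : Sx.Infinite := hinf _ bx
  have hSyi : Sy.Infinite := hinf _ by'
  have hdx : Disjoint (Sx \ Set.range x) (Set.range x) := Set.disjoint_sdiff_left
  have hdy : Disjoint (Sy \ Set.range y) (Set.range y) := Set.disjoint_sdiff_left
  have hux : (Sx \ Set.range x) ∪ Set.range x = Sx :=
    Set.diff_union_of_subset hsubx
  have huy : (Sy \ Set.range y) ∪ Set.range y = Sy :=
    Set.diff_union_of_subset hsuby
  -- the diffs are countably infinite
  have hcard : #(Sx \ Set.range x : Set V) = #(Sy \ Set.range y : Set V) := by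
    haveI h1 : Infinite (Sx \ Set.range x : Set V) :=
      ((hSxi.diff (Set.finite_range x))).to_subtype
    haveI h2 : Infinite (Sy \ Set.range y : Set V) :=
      ((hSyi.diff (Set.finite_range y))).to_subtype
    rw [Cardinal.mk_eq_aleph0, Cardinal.mk_eq_aleph0]
  obtain ⟨ed⟩ := Cardinal.eq.mp hcard
  have hxinj : Function.Injective x := hx.injective
  have hyinj : Function.Injective y := hy.injective
  let er : (Set.range x : Set V) ≃ (Set.range y : Set V) :=
    (Equiv.ofInjective x hxinj).symm.trans (Equiv.ofInjective y hyinj)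
  let E : (Sx : Set V) ≃ (Sy : Set V) :=
    (Equiv.setCongr hux.symm).trans ((Equiv.Set.union hdx).trans
      ((ed.sumCongr er).trans ((Equiv.Set.union hdy).symm.trans (Equiv.setCongr huy))))
  refine ⟨bx.equiv by' E, fun i => ?_⟩
  have hmx : x i ∈ Sx := hsubx ⟨i, rfl⟩
  have hmy : y i ∈ Sy := hsuby ⟨i, rfl⟩
  have h1 : bx ⟨x i, hmx⟩ = x i := Module.Basis.extend_apply_self _ _
  have hE : E ⟨x i, hmx⟩ = ⟨y i, hmy⟩ := by
    have hxr : ((⟨x i, hmx⟩ : Sx) : V) ∈ Set.range x := ⟨i, rfl⟩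
    have step1 : (Equiv.Set.union hdx) ((Equiv.setCongr hux.symm) ⟨x i, hmx⟩)
        = Sum.inr ⟨x i, hxr⟩ := Equiv.Set.union_apply_right hdx hxr
    have her : er ⟨x i, hxr⟩ = ⟨y i, ⟨i, rfl⟩⟩ := by
      have : (Equiv.ofInjective x hxinj).symm ⟨x i, hxr⟩ = i := by
        rw [Equiv.symm_apply_eq]
        rfl
      simp only [er, Equiv.trans_apply, this]
      rfl
    have step3 : (Equiv.Set.union hdy).symm (Sum.inr (⟨y i, ⟨i, rfl⟩⟩ : (Set.range y : Set V)))
        = ⟨y i, Or.inr ⟨i, rfl⟩⟩ := rfl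
    simp only [E, Equiv.trans_apply, step1, Equiv.sumCongr_apply, Sum.map_inr, her, step3]
    rfl
  calc (bx.equiv by' E) (x i) = (bx.equiv by' E) (bx ⟨x i, hmx⟩) := by rw [h1]
    _ = by' (E ⟨x i, hmx⟩) := bx.equiv_apply _ _ _
    _ = by' ⟨y i, hmy⟩ := by rw [hE]
    _ = y i := Module.Basis.extend_apply_self _ _


end Aux

/-- If some linearly independent `n`-tuple can be mapped into a `k`-dimensional
subspace of `V` by an element of `G`, then every `n`-tuple can. -/
theorem stmt_11 (p : ℕ) [Fact p.Prime] (hp : p ≠ 2)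
    (V : Type*) [AddCommGroup V] [Module (ZMod p) V] [Countable V] [Infinite V]
    (G : Subgroup (Equiv.Perm V))
    (hclosed : ∀ f : Equiv.Perm V, (∀ F : Finset V, ∃ g ∈ G, ∀ x ∈ F, g x = f x) → f ∈ G)
    (hAut : ∀ φ : V ≃ₗ[ZMod p] V, (φ.toEquiv : Equiv.Perm V) ∈ G)
    (hzero : ∀ g ∈ G, g 0 = (0 : V))
    (n k : ℕ) (hn : 1 ≤ n) (hk : 1 ≤ k)
    (t : Fin n → V) (ht : LinearIndependent (ZMod p) t)
    (g : Equiv.Perm V) (hg : g ∈ G)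
    (W : Submodule (ZMod p) V) (hW : Module.finrank (ZMod p) W = k)
    (hmap : ∀ i, g (t i) ∈ W)
    (s : Fin n → V) :
    ∃ g' ∈ G, ∃ W' : Submodule (ZMod p) V,
      Module.finrank (ZMod p) W' = k ∧ ∀ i, g' (s i) ∈ W' := by
  classical
  -- main claim, by induction on the defect D
  have claim : ∀ D : ℕ, ∀ A : Finset V, (0:V) ∉ A → A.card ≤ n →
      ∀ B : Finset V, B ⊆ A →
        LinearIndependent (ZMod p) ((↑) : (↑B : Set V) → V) →
        A.card ≤ B.card + D →
        ∃ h : Equiv.Perm V, h ∈ G ∧ ∀ x ∈ A, h x ∈ W := by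
    intro D
    induction D with
    | zero =>
      intro A h0 hcard B hBA hBind hm
      -- B = A, A is linearly independent; squash directly
      have hBA' : B = A := Finset.eq_of_subset_of_card_le hBA (by omega)
      subst hBA'
      -- enumerate B
      set m := B.card with hmdef
      let eB : ↥B ≃ Fin m := B.equivFin
      let bT : Fin m → V := fun i => ((eB.symm i : ↥B) : V)
      have hbT : LinearIndependent (ZMod p) bT := by
        have : LinearIndependent (ZMod p) (fun b : ↥(↑B : Set V) => (b : V)) := hBind
        exact this.comp eB.symm (Equiv.injective _)
      have hmn : m ≤ n := hmdef ▸ hcard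
      have htc : LinearIndependent (ZMod p) (t ∘ Fin.castLE hmn) :=
        ht.comp _ (Fin.castLE_injective hmn)
      obtain ⟨φ, hφ⟩ := exists_linear_aut' bT (t ∘ Fin.castLE hmn) hbT htc
      refine ⟨g * φ.toEquiv, mul_mem hg (hAut φ), ?_⟩
      intro x hx
      have hx' : bT (eB ⟨x, hx⟩) = x := by simp [bT]
      have : φ x = t (Fin.castLE hmn (eB ⟨x, hx⟩)) := by
        have h2 := hφ (eB ⟨x, hx⟩)
        rw [hx'] at h2
        exact h2
      rw [Equiv.Perm.mul_apply]
      show g (φ.toEquiv x) ∈ W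
      rw [LinearEquiv.coe_toEquiv, this]
      exact hmap _
    | succ D ih =>
      intro A h0 hcard B hBA hBind hm
      set m := B.card with hmdef
      let eB : ↥B ≃ Fin m := B.equivFin
      let bT : Fin m → V := fun i => ((eB.symm i : ↥B) : V)
      have hbT : LinearIndependent (ZMod p) bT := by
        have : LinearIndependent (ZMod p) (fun b : ↥(↑B : Set V) => (b : V)) := hBind
        exact this.comp eB.symm (Equiv.injective _)
      have hmn : m ≤ n := le_trans (hmdef ▸ Finset.card_le_card hBA) hcard
      have htc : LinearIndependent (ZMod p) (t ∘ Fin.castLE hmn) :=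
        ht.comp _ (Fin.castLE_injective hmn)
      obtain ⟨φ, hφ⟩ := exists_linear_aut' bT (t ∘ Fin.castLE hmn) hbT htc
      by_cases hc : ∀ x ∈ A, g (φ x) ∈ W
      · exact ⟨g * φ.toEquiv, mul_mem hg (hAut φ), fun x hx => by
          rw [Equiv.Perm.mul_apply]; exact hc x hx⟩
      push_neg at hc
      obtain ⟨a₀, ha₀A, hq₀⟩ := hc
      -- the w-vectors
      set wvec : Fin m → V := fun i => g (t (Fin.castLE hmn i)) with hwdef
      have hwW : ∀ i, wvec i ∈ W := fun i => hmap _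
      -- basis of Z := span of wvec range, chosen within the range
      obtain ⟨zb, hzb_sub, hzb_span, hzb_ind⟩ :=
        exists_linearIndependent (ZMod p) (Set.range wvec)
      have hzbW : zb ⊆ (W : Set V) := hzb_sub.trans (by
        rintro _ ⟨i, rfl⟩; exact hwW i)
      have hzb_fin : zb.Finite := (Set.finite_range wvec).subset hzb_sub
      -- enumerate zb
      haveI : Fintype ↥zb := hzb_fin.fintype
      set z : ℕ := Fintype.card ↥zb with hzdef
      let eZ : ↥zb ≃ Fin z := Fintype.equivFin _
      let zT : Fin z → V := fun i => ((eZ.symm i : ↥zb) : V)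
      have hzT : LinearIndependent (ZMod p) zT :=
        hzb_ind.comp eZ.symm (Equiv.injective _)
      have hrzT : Set.range zT = zb := by
        ext v; constructor
        · rintro ⟨i, rfl⟩; exact (eZ.symm i).2
        · intro hv; exact ⟨eZ ⟨v, hv⟩, by simp [zT]⟩
      have hzbfix : ∀ i, zT i ∈ zb := fun i => (eZ.symm i).2
      -- q₀ := g (φ a₀) is outside W hence outside span zb
      set q₀ : V := g (φ a₀) with hq₀def
      have hq₀span : q₀ ∉ span (ZMod p) (Set.range zT) := by
        rw [hrzT]
        intro hmem
        exact hq₀ ((span_le.mpr hzbW) hmem)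
      -- choose v outside span zb and outside g '' (span (range t))
      have hfin1 : ((span (ZMod p) zb : Submodule (ZMod p) V) : Set V).Finite :=
        span_set_finite' hzb_fin
      have hfin2 : (g '' ((span (ZMod p) (Set.range t) : Submodule (ZMod p) V) : Set V)).Finite :=
        (span_set_finite' (Set.finite_range t)).image _
      obtain ⟨v, hv⟩ := (Set.Finite.infinite_compl (hfin1.union hfin2)).nonempty
      rw [Set.mem_compl_iff, Set.mem_union, not_or] at hv
      obtain ⟨hv1, hv2⟩ := hv
      have hvspan : v ∉ span (ZMod p) (Set.range zT) := by rw [hrzT]; exact hv1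
      -- the automorphism ψ fixing zb and sending q₀ to v
      have hX : LinearIndependent (ZMod p) (Fin.cons q₀ zT : Fin (z+1) → V) :=
        linearIndependent_fin_cons.mpr ⟨hzT, hq₀span⟩
      have hY : LinearIndependent (ZMod p) (Fin.cons v zT : Fin (z+1) → V) :=
        linearIndependent_fin_cons.mpr ⟨hzT, hvspan⟩
      obtain ⟨ψ, hψ⟩ := exists_linear_aut' _ _ hX hY
      have hψq₀ : ψ q₀ = v := by simpa using hψ 0
      have hψz : ∀ i, ψ (zT i) = zT i := by
        intro i; simpa using hψ i.succ
      -- ψ fixes span zb pointwise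
      have hψfix : ∀ u ∈ span (ZMod p) zb, ψ u = u := by
        intro u hu
        induction hu using span_induction with
        | mem u hu =>
          obtain ⟨i, rfl⟩ : ∃ i, zT i = u := by
            rw [← hrzT] at hu; exact hu
          exact hψz i
        | zero => exact map_zero ψ
        | add u w _ _ hu hw => rw [map_add, hu, hw]
        | smul a u _ hu => rw [map_smul, hu]
      -- ψ fixes each wvec i
      have hψw : ∀ i, ψ (wvec i) = wvec i := by
        intro i
        apply hψfix
        rw [hzb_span]
        exact subset_span ⟨i, rfl⟩
      -- the group element for this round
      set h₀ : Equiv.Perm V := g⁻¹ * ψ.toEquiv * g * φ.toEquiv with hh₀def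
      have hh₀G : h₀ ∈ G :=
        mul_mem (mul_mem (mul_mem (inv_mem hg) (hAut ψ)) hg) (hAut φ)
      have hg0 : g (0:V) = 0 := hzero g hg
      have hginv0 : g⁻¹ (0:V) = 0 := by
        have h' : g⁻¹ (g 0) = 0 := Equiv.symm_apply_apply g 0
        rwa [hg0] at h'
      have hh₀0 : h₀ (0:V) = 0 := by
        have e1 : h₀ (0:V) = g⁻¹ (ψ (g (φ (0:V)))) := rfl
        rw [e1, map_zero φ, hg0, map_zero ψ, hginv0]
      -- action of h₀ on B : lands on the t's
      have hh₀B : ∀ i : Fin m, h₀ (bT i) = t (Fin.castLE hmn i) := by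
        intro i
        have e1 : h₀ (bT i) = g⁻¹ (ψ (g (φ (bT i)))) := rfl
        rw [e1, hφ i]
        show g⁻¹ (ψ (wvec i)) = t (Fin.castLE hmn i)
        rw [hψw i]
        show g⁻¹ (g (t (Fin.castLE hmn i))) = t (Fin.castLE hmn i)
        exact Equiv.symm_apply_apply g _
      -- action of h₀ on a₀
      set ξ : V := g⁻¹ v with hξdef
      have hh₀a₀ : h₀ a₀ = ξ := by
        have e1 : h₀ a₀ = g⁻¹ (ψ (g (φ a₀))) := rfl
        rw [e1, ← hq₀def, hψq₀]
      have hξt : ξ ∉ span (ZMod p) (Set.range (t ∘ Fin.castLE hmn)) := by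
        intro hmem
        apply hv2
        refine ⟨ξ, ?_, ?_⟩
        · exact span_mono (Set.range_comp_subset_range _ _) hmem
        · rw [hξdef]; exact Equiv.apply_symm_apply g v
      -- new sets
      set A₂ : Finset V := Finset.image h₀ A with hA₂def
      set B₂ : Finset V := Finset.image h₀ (insert a₀ B) with hB₂def
      have ha₀B : a₀ ∉ B := by
        intro hmem
        have heq : bT (eB ⟨a₀, hmem⟩) = a₀ := by simp [bT]
        have h2 := hφ (eB ⟨a₀, hmem⟩)
        rw [heq] at h2
        apply hq₀
        rw [hq₀def, h2]
        exact hmap _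
      have hB₂A₂ : B₂ ⊆ A₂ :=
        Finset.image_subset_image (Finset.insert_subset ha₀A hBA)
      have h0A₂ : (0:V) ∉ A₂ := by
        rw [hA₂def]
        intro hmem
        obtain ⟨a, haA, ha⟩ := Finset.mem_image.mp hmem
        have : a = 0 := by
          apply h₀.injective
          rw [ha, hh₀0]
        exact h0 (this ▸ haA)
      have hcardA₂ : A₂.card = A.card := Finset.card_image_of_injective _ h₀.injective
      have hcardB₂ : B₂.card = B.card + 1 := by
        rw [hB₂def, Finset.card_image_of_injective _ h₀.injective,
          Finset.card_insert_of_notMem ha₀B]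
      -- B₂ is linearly independent
      have hsetB₂ : (↑B₂ : Set V) = Set.range (Fin.cons ξ (t ∘ Fin.castLE hmn) : Fin (m+1) → V) := by
        rw [hB₂def]
        rw [Finset.coe_image, Finset.coe_insert]
        rw [Set.image_insert_eq, hh₀a₀]
        have hBr : (↑B : Set V) = Set.range bT := by
          ext u; constructor
          · intro hu; exact ⟨eB ⟨u, hu⟩, by simp [bT]⟩
          · rintro ⟨i, rfl⟩; exact (eB.symm i).2
        rw [hBr, ← Set.range_comp]
        have : (h₀ ∘ bT) = (t ∘ Fin.castLE hmn) := funext hh₀B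
        rw [this, Fin.range_cons]
      have hB₂ind : LinearIndependent (ZMod p) ((↑) : (↑B₂ : Set V) → V) := by
        rw [hsetB₂]
        exact (linearIndepOn_id_range_iff (linearIndependent_fin_cons.mpr ⟨htc, hξt⟩).injective).mpr (linearIndependent_fin_cons.mpr ⟨htc, hξt⟩)
      -- apply induction hypothesis
      obtain ⟨h₁, hh₁G, hh₁⟩ := ih A₂ h0A₂ (hcardA₂ ▸ hcard) B₂ hB₂A₂ hB₂ind
        (by omega)
      refine ⟨h₁ * h₀, mul_mem hh₁G hh₀G, ?_⟩
      intro x hx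
      rw [Equiv.Perm.mul_apply]
      exact hh₁ _ (Finset.mem_image_of_mem _ hx)
  -- apply the claim
  set A₀ : Finset V := (Finset.image s Finset.univ).erase 0 with hA₀def
  have h0A₀ : (0:V) ∉ A₀ := Finset.notMem_erase _ _
  have hcardA₀ : A₀.card ≤ n := by
    calc A₀.card ≤ (Finset.image s Finset.univ).card := Finset.card_erase_le
      _ ≤ Finset.univ.card := Finset.card_image_le
      _ = n := by simp
  have hemptyind : LinearIndependent (ZMod p) ((↑) : ((↑(∅ : Finset V)) : Set V) → V) := by
    rw [Finset.coe_empty]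
    exact linearIndependent_empty (ZMod p) V
  obtain ⟨h, hhG, hh⟩ := claim A₀.card A₀ h0A₀ hcardA₀ ∅ (Finset.empty_subset _)
    hemptyind (by simp)
  refine ⟨h, hhG, W, hW, ?_⟩
  intro i
  by_cases hsi : s i = 0
  · rw [hsi, hzero h hhG]; exact zero_mem W
  · apply hh
    rw [hA₀def]
    exact Finset.mem_erase.mpr ⟨hsi, Finset.mem_image_of_mem s (Finset.mem_univ i)⟩
end

section
/- Let S be a countable type, let M be a closed subgroup of Equiv.Perm S, and let r be a Setoid (equivalence relation) on S that is M-invariant (for all g ∈ M and a, b ∈ S, a ≈ b implies g a ≈ g b) and all of whose equivalence classes are finite. Then the induced action of M on the quotient Q = Quotient r is closed: for every permutation F of Q such that for each finite subset T of Q there is g ∈ M with ⟦g a⟧ = F ⟦a⟧ for all a ∈ S with ⟦a⟧ ∈ T, there exists g ∈ M with ⟦g a⟧ = F ⟦a⟧ for every a ∈ S. -/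
section Aux

variable {S : Type*} (M : Subgroup (Equiv.Perm S)) (r : Setoid S)
  (F : Equiv.Perm (Quotient r)) (e : ℕ → S)

/-- `h` (restricted below `n`) is a "good" partial approximation. -/
def IsGoodApprox (n : ℕ) (h : ℕ → S) : Prop :=
  ∀ T : Finset (Quotient r), ∃ g ∈ M, (∀ i < n, g (e i) = h i) ∧
    ∀ a : S, Quotient.mk r a ∈ T → Quotient.mk r (g a) = F (Quotient.mk r a)

theorem isGoodApprox_step
    (hfin : ∀ a : S, {b : S | r.r a b}.Finite)
    (n : ℕ) (h : ℕ → S) (hg : IsGoodApprox M r F e n h) :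
    ∃ v : S, IsGoodApprox M r F e (n + 1) (Function.update h n v) := by
  classical
  by_contra hc
  push_neg at hc
  have hc' : ∀ v : S, ∃ T : Finset (Quotient r), ∀ g ∈ M,
      (∀ i < n + 1, g (e i) = Function.update h n v i) →
      ∃ a : S, Quotient.mk r a ∈ T ∧ Quotient.mk r (g a) ≠ F (Quotient.mk r a) := by
    intro v
    have := hc v
    unfold IsGoodApprox at this
    push_neg at this
    obtain ⟨T, hT⟩ := this
    exact ⟨T, fun g hgM hgi => by
      have := hT g hgM
      exact this hgi⟩
  choose Tv hTv using hc'
  obtain ⟨c, hcrep⟩ := Quotient.exists_rep (F (Quotient.mk r (e n)))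
  set V : Finset S := (hfin c).toFinset with hV
  obtain ⟨g, hgM, hgi, hga⟩ :=
    hg (insert (Quotient.mk r (e n)) (V.biUnion Tv))
  have hgen : Quotient.mk r (g (e n)) = F (Quotient.mk r (e n)) :=
    hga (e n) (Finset.mem_insert_self _ _)
  have hvV : g (e n) ∈ V := by
    rw [hV, Set.Finite.mem_toFinset]
    exact Quotient.exact (hcrep.trans hgen.symm)
  obtain ⟨a, haT, hane⟩ := hTv (g (e n)) g hgM (by
    intro i hi
    rcases Nat.lt_succ_iff_lt_or_eq.mp hi with hi' | rfl
    · rw [Function.update_of_ne (Nat.ne_of_lt hi'), hgi i hi']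
    · rw [Function.update_self])
  exact hane (hga a (Finset.mem_insert_of_mem (Finset.mem_biUnion.mpr ⟨_, hvV, haT⟩)))

end Aux

/-- If `M` is a closed subgroup of `Equiv.Perm S` (`S` countable) and `r` is an
`M`-invariant equivalence relation on `S` with finite classes, then the induced
action of `M` on the quotient is closed. -/
theorem stmt_14 (S : Type*) [Countable S]
    (M : Subgroup (Equiv.Perm S))
    (hM : ∀ f : Equiv.Perm S, (∀ F : Finset S, ∃ g ∈ M, ∀ x ∈ F, g x = f x) → f ∈ M)
    (r : Setoid S)
    (hinv : ∀ g ∈ M, ∀ a b : S, r.r a b → r.r (g a) (g b))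
    (hfin : ∀ a : S, {b : S | r.r a b}.Finite)
    (F : Equiv.Perm (Quotient r))
    (happrox : ∀ T : Finset (Quotient r), ∃ g ∈ M, ∀ a : S,
      Quotient.mk r a ∈ T → Quotient.mk r (g a) = F (Quotient.mk r a)) :
    ∃ g ∈ M, ∀ a : S, Quotient.mk r (g a) = F (Quotient.mk r a) := by
  classical
  rcases isEmpty_or_nonempty S with hS | hS
  · exact ⟨1, M.one_mem, fun a => (IsEmpty.false a).elim⟩
  obtain ⟨e, he⟩ := exists_surjective_nat S
  -- choose extensions of good approximations
  choose v hv using isGoodApprox_step M r F e hfin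
  -- recursively build a chain of good approximations
  let H : ∀ n : ℕ, {h : ℕ → S // IsGoodApprox M r F e n h} :=
    fun n => Nat.rec
      ⟨fun _ => Classical.arbitrary S, fun T => by
        obtain ⟨g, hgM, hg⟩ := happrox T
        exact ⟨g, hgM, fun i hi => absurd hi (Nat.not_lt_zero i), hg⟩⟩
      (fun m ih => ⟨Function.update ih.1 m (v m ih.1 ih.2), hv m ih.1 ih.2⟩) n
  have Hstep : ∀ n, (H (n + 1)).1 = Function.update (H n).1 n (v n (H n).1 (H n).2) :=
    fun n => rfl
  have stable : ∀ i n, i < n → (H n).1 i = (H (i + 1)).1 i := by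
    intro i n
    induction n with
    | zero => intro h; exact absurd h (Nat.not_lt_zero i)
    | succ m ih =>
      intro h
      rcases Nat.lt_succ_iff_lt_or_eq.mp h with h' | rfl
      · rw [Hstep m, Function.update_of_ne (Nat.ne_of_lt h'), ih h']
      · rfl
  set f : ℕ → S := fun i => (H (i + 1)).1 i with hf
  have Goodf : ∀ n, IsGoodApprox M r F e n f := by
    intro n T
    obtain ⟨g, hgM, hgi, hga⟩ := (H n).2 T
    exact ⟨g, hgM, fun i hi => by rw [hgi i hi, stable i n hi], hga⟩
  set fS : S → S := fun s => f (Function.invFun e s) with hfS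
  have heinv : ∀ s : S, e (Function.invFun e s) = s := fun s => Function.invFun_eq (he s)
  -- key approximation property of fS
  have keyA : ∀ (A : Finset S) (T : Finset (Quotient r)), ∃ g ∈ M,
      (∀ s ∈ A, g s = fS s) ∧
      ∀ a : S, Quotient.mk r a ∈ T → Quotient.mk r (g a) = F (Quotient.mk r a) := by
    intro A T
    set n : ℕ := (A.sup (Function.invFun e)) + 1 with hn
    obtain ⟨g, hgM, hgi, hga⟩ := Goodf n T
    refine ⟨g, hgM, fun s hs => ?_, hga⟩
    have hlt : Function.invFun e s < n := Nat.lt_succ_of_le (Finset.le_sup hs)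
    calc g s = g (e (Function.invFun e s)) := by rw [heinv s]
      _ = f (Function.invFun e s) := hgi _ hlt
      _ = fS s := rfl
  -- fS induces F on the quotient
  have propP : ∀ a : S, Quotient.mk r (fS a) = F (Quotient.mk r a) := by
    intro a
    obtain ⟨g, hgM, hgi, hga⟩ := keyA {a} {Quotient.mk r a}
    rw [← hgi a (Finset.mem_singleton_self a)]
    exact hga a (Finset.mem_singleton_self _)
  -- fS is injective
  have hinj : Function.Injective fS := by
    intro a b hab
    obtain ⟨g, hgM, hgi, -⟩ := keyA {a, b} ∅
    have ha := hgi a (by simp)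
    have hb := hgi b (by simp)
    exact g.injective (by rw [ha, hb, hab])
  -- fS is surjective
  have hsurj : Function.Surjective fS := by
    intro b
    obtain ⟨c, hcrep⟩ := Quotient.exists_rep (F.symm (Quotient.mk r b))
    obtain ⟨g, hgM, hgi, hga⟩ := keyA (hfin c).toFinset {Quotient.mk r c}
    have hgc : Quotient.mk r (g c) = Quotient.mk r b := by
      rw [hga c (Finset.mem_singleton_self _), hcrep, Equiv.apply_symm_apply]
    have hx : r.r c (g.symm b) := by
      have h1 : r.r (g c) b := Quotient.exact hgc
      have h2 := hinv _ (M.inv_mem hgM) _ _ h1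
      simpa using h2
    have hxmem : g.symm b ∈ (hfin c).toFinset := (hfin c).mem_toFinset.mpr hx
    refine ⟨g.symm b, ?_⟩
    rw [← hgi _ hxmem]
    simp
  -- assemble the permutation
  set p : Equiv.Perm S := Equiv.ofBijective fS ⟨hinj, hsurj⟩ with hp
  have hpM : p ∈ M := by
    apply hM
    intro A
    obtain ⟨g, hgM, hgi, -⟩ := keyA A ∅
    exact ⟨g, hgM, fun x hx => hgi x hx⟩
  exact ⟨p, hpM, fun a => propP a⟩
end
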